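/- arXiv:0805.3743 — 4 statements merged into one kernel-verified Lean document; each statement's English description precedes it below -/
import Mathlib

section
/- For all positive integers m and all nonnegative integers n, the following identity of rational numbers holds: \sum_{p=0}^{\lfloor n/4 \rfloor} (m/(5p+m)) \binom{5p+m}{p} \binom{n+p+m-1}{n-4p} = \sum_{p=0}^{\lfloor n/2 \rfloor} (-1)^p (m/(m+n)) \binom{m+n+p-1}{p} \binom{m+2n-2p-1}{n-2p}. -/
open PowerSeries Finset

namespace SunAux


abbrev S := PowerSeries ℚ

/-- truncated agreement of power series -/
def Agree (k : ℕ) (a b : S) : Prop := ∀ i, i < k → (coeff i) a = (coeff i) b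

theorem Agree.mono {k l : ℕ} {a b : S} (h : Agree k a b) (hlk : l ≤ k) : Agree l a b :=
  fun i hi => h i (lt_of_lt_of_le hi hlk)

theorem Agree.add {k : ℕ} {a b c d : S} (h1 : Agree k a b) (h2 : Agree k c d) :
    Agree k (a + c) (b + d) := by
  intro i hi; simp [map_add, h1 i hi, h2 i hi]

theorem Agree.neg {k : ℕ} {a b : S} (h1 : Agree k a b) : Agree k (-a) (-b) := by
  intro i hi; simp [h1 i hi]

theorem Agree.sub {k : ℕ} {a b c d : S} (h1 : Agree k a b) (h2 : Agree k c d) :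
    Agree k (a - c) (b - d) := by
  intro i hi; simp [map_sub, h1 i hi, h2 i hi]

theorem Agree.mul {k : ℕ} {a b c d : S} (h1 : Agree k a b) (h2 : Agree k c d) :
    Agree k (a * c) (b * d) := by
  intro i hi
  rw [coeff_mul, coeff_mul]
  refine Finset.sum_congr rfl fun p hp => ?_
  rw [HasAntidiagonal.mem_antidiagonal] at hp
  have h1' : p.1 < k := lt_of_le_of_lt (hp ▸ Nat.le_add_right p.1 p.2) hi
  have h2' : p.2 < k := lt_of_le_of_lt (hp ▸ Nat.le_add_left p.2 p.1) hi
  rw [h1 p.1 h1', h2 p.2 h2']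

theorem Agree.pow {k : ℕ} {a b : S} (h1 : Agree k a b) (t : ℕ) :
    Agree k (a ^ t) (b ^ t) := by
  induction t with
  | zero => intro i hi; rfl
  | succ t ih => rw [pow_succ, pow_succ]; exact ih.mul h1

theorem Agree.refl (k : ℕ) (c : S) : Agree k c c := fun _ _ => rfl

theorem Agree.constMul {k : ℕ} {a b : S} (c : S) (h1 : Agree k a b) :
    Agree k (c * a) (c * b) := (Agree.refl k c).mul h1

theorem Agree.xmul {k : ℕ} {a b : S} (h1 : Agree k a b) : Agree (k + 1) (X * a) (X * b) := by
  intro i hi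
  cases i with
  | zero => simp [coeff_zero_eq_constantCoeff]
  | succ i => rw [coeff_succ_X_mul, coeff_succ_X_mul]; exact h1 i (by omega)

/-- contraction property -/
def IsContr (Φ : S → S) : Prop := ∀ k a b, Agree k a b → Agree (k + 1) (Φ a) (Φ b)

noncomputable def fix (Φ : S → S) : S := PowerSeries.mk fun n => coeff n (Φ^[n + 1] 1)

theorem fix_agree {Φ : S → S} (hΦ : IsContr Φ) (k l : ℕ) (hkl : k ≤ l) :
    Agree k (Φ^[k] 1) (Φ^[l] 1) := by
  induction k generalizing l with
  | zero => intro i hi; omega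
  | succ k ih =>
    obtain ⟨l', rfl⟩ : ∃ l', l = l' + 1 := ⟨l - 1, by omega⟩
    rw [Function.iterate_succ_apply', Function.iterate_succ_apply']
    exact hΦ k _ _ (ih l' (by omega))

theorem coeff_fix {Φ : S → S} (hΦ : IsContr Φ) (n l : ℕ) (hl : n < l) :
    coeff n (fix Φ) = coeff n (Φ^[l] 1) := by
  rw [fix, coeff_mk]
  exact fix_agree hΦ (n + 1) l (by omega) n (by omega)

theorem fix_eq {Φ : S → S} (hΦ : IsContr Φ) : fix Φ = Φ (fix Φ) := by
  ext n
  have h1 : Agree (n + 1) (fix Φ) (Φ^[n + 1] 1) := by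
    intro i hi
    exact coeff_fix hΦ i (n + 1) hi
  have h2 := hΦ (n + 1) _ _ h1
  rw [← Function.iterate_succ_apply' Φ (n + 1) 1] at h2
  rw [coeff_fix hΦ n (n + 2) (by omega)]
  exact (h2 n (by omega)).symm

theorem fix_unique {Φ : S → S} (hΦ : IsContr Φ) {a b : S} (ha : a = Φ a) (hb : b = Φ b) :
    a = b := by
  ext n
  suffices h : ∀ k, Agree k a b from h (n + 1) n (by omega)
  intro k
  induction k with
  | zero => intro i hi; omega
  | succ k ih => rw [ha, hb]; exact hΦ k a b ih




/-- coefficient vanishing for powers of a series with zero constant term -/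
theorem coeff_pow_eq_zero {w : S} (hw : constantCoeff w = 0) {i N : ℕ} (hNi : N < i) :
    coeff N (w ^ i) = 0 := by
  have hdvd : (X : S) ^ i ∣ w ^ i := pow_dvd_pow_of_dvd (X_dvd_iff.2 hw) i
  exact (X_pow_dvd_iff.1 hdvd) N hNi

/-- substitution of `f` along `w` (meaningful when `w` has zero constant term) -/
noncomputable def subw (w f : S) : S :=
  PowerSeries.mk fun N => coeff N (Polynomial.aeval w (trunc (N + 1) f))

theorem coeff_aeval_eq_zero {w : S} (hw : constantCoeff w = 0) {N : ℕ} {P : Polynomial ℚ}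
    (hP : ∀ j, j ≤ N → P.coeff j = 0) : coeff N (Polynomial.aeval w P) = 0 := by
  rw [Polynomial.aeval_eq_sum_range' (Nat.lt_succ_self P.natDegree)]
  rw [map_sum]
  refine Finset.sum_eq_zero fun i _ => ?_
  rcases le_or_gt i N with hiN | hiN
  · rw [hP i hiN]; simp
  · rw [smul_eq_C_mul, coeff_C_mul, coeff_pow_eq_zero hw hiN, mul_zero]

theorem coeff_aeval_congr {w : S} (hw : constantCoeff w = 0) {N : ℕ} {P Q : Polynomial ℚ}
    (hPQ : ∀ j, j ≤ N → P.coeff j = Q.coeff j) :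
    coeff N (Polynomial.aeval w P) = coeff N (Polynomial.aeval w Q) := by
  have h : coeff N (Polynomial.aeval w (P - Q)) = 0 :=
    coeff_aeval_eq_zero hw (fun j hj => by
      rw [Polynomial.coeff_sub, hPQ j hj, sub_self])
  rw [map_sub, map_sub] at h
  linarith [h]

theorem coeff_subw_aeval {w : S} (hw : constantCoeff w = 0) (f : S) {N : ℕ} {P : Polynomial ℚ}
    (hP : ∀ j, j ≤ N → P.coeff j = coeff j f) :
    coeff N (subw w f) = coeff N (Polynomial.aeval w P) := by
  rw [subw, coeff_mk]
  refine coeff_aeval_congr hw fun j hj => ?_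
  rw [coeff_trunc, if_pos (by omega), hP j hj]

theorem coeff_subw (w f : S) (N : ℕ) (hw : constantCoeff w = 0) :
    coeff N (subw w f) = ∑ i ∈ range (N + 1), coeff i f * coeff N (w ^ i) := by
  rw [subw, coeff_mk]
  rw [Polynomial.aeval_eq_sum_range' (natDegree_trunc_lt f N)]
  rw [map_sum]
  refine Finset.sum_congr rfl fun i hi => ?_
  rw [smul_eq_C_mul, coeff_C_mul, coeff_trunc, if_pos (mem_range.1 hi)]

theorem subw_one {w : S} (hw : constantCoeff w = 0) : subw w 1 = 1 := by
  ext N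
  rw [coeff_subw_aeval hw 1 (P := 1) (fun j hj => by
    simp [Polynomial.coeff_one, coeff_one])]
  rw [map_one]

theorem subw_X {w : S} (hw : constantCoeff w = 0) : subw w X = w := by
  ext N
  rw [coeff_subw_aeval hw X (P := Polynomial.X) (fun j hj => by
    rw [Polynomial.coeff_X, coeff_X]; simp [eq_comm])]
  rw [Polynomial.aeval_X]

theorem subw_add {w : S} (hw : constantCoeff w = 0) (f g : S) :
    subw w (f + g) = subw w f + subw w g := by
  ext N
  rw [map_add, subw, subw, subw, coeff_mk, coeff_mk, coeff_mk, map_add (trunc (N + 1)) f g, map_add, map_add]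

theorem subw_mul {w : S} (hw : constantCoeff w = 0) (f g : S) :
    subw w (f * g) = subw w f * subw w g := by
  ext N
  have key : coeff N (subw w (f * g)) =
      coeff N (Polynomial.aeval w (trunc (N + 1) f * trunc (N + 1) g)) := by
    refine coeff_subw_aeval hw _ fun j hj => ?_
    rw [coeff_mul_eq_coeff_trunc_mul_trunc f g (by omega : j < N + 1), ← Polynomial.coe_mul, Polynomial.coeff_coe]
  rw [key, map_mul, coeff_mul, coeff_mul]
  refine Finset.sum_congr rfl fun p hp => ?_
  rw [HasAntidiagonal.mem_antidiagonal] at hp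
  have h1 : coeff p.1 (Polynomial.aeval w (trunc (N + 1) f)) = coeff p.1 (subw w f) :=
    (coeff_subw_aeval hw f (fun j hj => by
      rw [coeff_trunc, if_pos (by omega)])).symm
  have h2 : coeff p.2 (Polynomial.aeval w (trunc (N + 1) g)) = coeff p.2 (subw w g) :=
    (coeff_subw_aeval hw g (fun j hj => by
      rw [coeff_trunc, if_pos (by omega)])).symm
  rw [h1, h2]

theorem subw_pow {w : S} (hw : constantCoeff w = 0) (f : S) (t : ℕ) :
    subw w (f ^ t) = subw w f ^ t := by
  induction t with
  | zero => simpa using subw_one hw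
  | succ t ih => rw [pow_succ, pow_succ, subw_mul hw, ih]

theorem subw_zero (w : S) : subw w 0 = 0 := by
  ext N
  rw [subw, coeff_mk, map_zero (trunc (N + 1))]; simp

theorem subw_neg {w : S} (hw : constantCoeff w = 0) (f : S) : subw w (-f) = -subw w f := by
  have h := subw_add hw f (-f)
  rw [add_neg_cancel, subw_zero] at h
  exact eq_neg_of_add_eq_zero_right h.symm

theorem subw_sub {w : S} (hw : constantCoeff w = 0) (f g : S) :
    subw w (f - g) = subw w f - subw w g := by
  rw [sub_eq_add_neg, sub_eq_add_neg, subw_add hw, subw_neg hw]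

/-- expansion of a coefficient of `subw w f * B` -/
theorem coeff_subw_mul {w : S} (hw : constantCoeff w = 0) (f B : S) (M : ℕ) :
    coeff M (subw w f * B) =
      ∑ i ∈ range (M + 1), coeff i f * coeff M (w ^ i * B) := by
  rw [coeff_mul]
  rw [Finset.Nat.sum_antidiagonal_eq_sum_range_succ_mk]
  have step : ∀ a ∈ range (M + 1), coeff a (subw w f) * coeff (M - a) B =
      ∑ i ∈ range (M + 1), coeff i f * (coeff a (w ^ i) * coeff (M - a) B) := by
    intro a ha
    rw [mem_range] at ha
    rw [coeff_subw w f a hw, Finset.sum_mul]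
    simp only [mul_assoc]
    refine Finset.sum_subset (fun x hx => by rw [mem_range] at *; omega) ?_
    intro i hi hni
    rw [mem_range] at hi hni
    rw [coeff_pow_eq_zero hw (by omega : a < i), zero_mul, mul_zero]
  rw [Finset.sum_congr rfl step, Finset.sum_comm]
  refine Finset.sum_congr rfl fun i _ => ?_
  rw [← Finset.mul_sum]
  congr 1
  rw [coeff_mul, Finset.Nat.sum_antidiagonal_eq_sum_range_succ_mk]




noncomputable abbrev D : Derivation ℚ S S := PowerSeries.derivative ℚ

theorem coeff_D (f : S) (n : ℕ) : coeff n (D f) = coeff (n + 1) f * (n + 1) :=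
  coeff_derivative f n

section Delta

variable {u : S} (hu : constantCoeff u = 1)

include hu

theorem hne_of_one : constantCoeff u ≠ 0 := by rw [hu]; exact one_ne_zero

omit hu in
theorem D_X_mul' (f : S) : D (X * f) = f + X * D f := by
  rw [Derivation.leibniz, smul_eq_mul, smul_eq_mul, derivative_X, mul_one, add_comm]

theorem delta_one : coeff 0 (u⁻¹ * D (X * u)) = 1 := by
  have hne : constantCoeff u ≠ 0 := hne_of_one hu
  rw [D_X_mul' u]
  have : u⁻¹ * (u + X * D u) = u⁻¹ * u + X * (u⁻¹ * D u) := by ring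
  rw [this, map_add, PowerSeries.inv_mul_cancel u hne]
  simp

theorem delta_two (s : ℕ) : coeff (s + 1) (u⁻¹ ^ (s + 2) * D (X * u)) = 0 := by
  have hne : constantCoeff u ≠ 0 := hne_of_one hu
  have hvu : u⁻¹ * u = 1 := PowerSeries.inv_mul_cancel u hne
  have h1 : u⁻¹ ^ (s + 2) * D (X * u) = u⁻¹ ^ (s + 1) + X * (u⁻¹ ^ (s + 2) * D u) := by
    rw [D_X_mul' u]
    calc u⁻¹ ^ (s + 2) * (u + X * D u)
        = u⁻¹ ^ (s + 1) * (u⁻¹ * u) + X * (u⁻¹ ^ (s + 2) * D u) := by ring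
      _ = u⁻¹ ^ (s + 1) + X * (u⁻¹ ^ (s + 2) * D u) := by rw [hvu, mul_one]
  rw [h1, map_add, coeff_succ_X_mul]
  -- derivative of inverse powers
  have hDuv : u * D u⁻¹ + u⁻¹ * D u = 0 := by
    have := Derivation.leibniz D u u⁻¹
    rw [PowerSeries.mul_inv_cancel u hne, Derivation.map_one_eq_zero] at this
    rw [smul_eq_mul, smul_eq_mul] at this
    linear_combination this.symm
  have hkey : u⁻¹ ^ s * D u⁻¹ = -(u⁻¹ ^ (s + 2) * D u) := by
    have h2 : u⁻¹ ^ (s + 1) * (u * D u⁻¹ + u⁻¹ * D u) = 0 := by rw [hDuv, mul_zero]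
    have h3 : u⁻¹ ^ (s + 1) * (u * D u⁻¹) = u⁻¹ ^ s * D u⁻¹ := by
      calc u⁻¹ ^ (s + 1) * (u * D u⁻¹) = (u⁻¹ ^ s * D u⁻¹) * (u⁻¹ * u) := by ring
        _ = u⁻¹ ^ s * D u⁻¹ := by rw [hvu, mul_one]
    have h4 : u⁻¹ ^ (s + 1) * (u⁻¹ * D u) = u⁻¹ ^ (s + 2) * D u := by ring
    linear_combination h2 - h3 - h4
  have hDpow : D (u⁻¹ ^ (s + 1)) = (s + 1) • (u⁻¹ ^ s • D u⁻¹) := by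
    have := D.leibniz_pow u⁻¹ (s + 1)
    simpa using this
  have hc : coeff s (D (u⁻¹ ^ (s + 1))) = coeff (s + 1) (u⁻¹ ^ (s + 1)) * (s + 1) :=
    coeff_D _ s
  rw [hDpow] at hc
  rw [map_nsmul] at hc
  rw [smul_eq_mul, hkey] at hc
  rw [nsmul_eq_mul, map_neg] at hc
  push_cast at hc
  have hs1 : (s + 1 : ℚ) ≠ 0 := by positivity
  have hsum : (s + 1 : ℚ) * (coeff s (u⁻¹ ^ (s + 2) * D u)
      + coeff (s + 1) (u⁻¹ ^ (s + 1))) = 0 := by linear_combination -hc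
  have h5 := (mul_eq_zero.1 hsum).resolve_left hs1
  linarith

end Delta


/-- **Core Lagrange-inversion-type lemma.** If `u` has constant term 1 and
`u ^ n = subw (X*u) Fser` (i.e. `u^n` is `φ^n` evaluated at `w := X*u`),
then `n * [x^n] (X*u)^j = j * [t^(n-j)] Fser`. -/
theorem core (u : S) (hu : constantCoeff u = 1) (Fser : S) (n j : ℕ) (hj : 1 ≤ j)
    (hjn : j ≤ n) (hser : u ^ n = subw (X * u) Fser) :
    (n : ℚ) * coeff n ((X * u) ^ j) = j * coeff (n - j) Fser := by
  have hne : constantCoeff u ≠ 0 := hne_of_one hu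
  have hXu0 : constantCoeff (X * u) = 0 := by
    rw [map_mul, constantCoeff_X, zero_mul]
  -- step 1 : n * coeff n (w^j) = coeff (n-1) (D (w^j))
  have s1 : (n : ℚ) * coeff n ((X * u) ^ j) = coeff (n - 1) (D ((X * u) ^ j)) := by
    have h1 : n - 1 + 1 = n := by omega
    have hcast : ((n - 1 : ℕ) : ℚ) = (n : ℚ) - 1 := by
      have h3 : (1 : ℕ) ≤ n := by omega
      rw [Nat.cast_sub h3, Nat.cast_one]
    rw [coeff_D, h1, hcast]
    ring
  -- step 2 : Leibniz power rule
  have s2 : coeff (n - 1) (D ((X * u) ^ j)) =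
      (j : ℚ) * coeff (n - 1) ((X * u) ^ (j - 1) * D (X * u)) := by
    have h := D.leibniz_pow (X * u) j
    rw [h, map_nsmul, nsmul_eq_mul, smul_eq_mul]
  -- step 3 : peel off X^(j-1)
  have s3 : coeff (n - 1) ((X * u) ^ (j - 1) * D (X * u)) =
      coeff (n - j) (u ^ (j - 1) * D (X * u)) := by
    have h1 : (X * u) ^ (j - 1) * D (X * u) = X ^ (j - 1) * (u ^ (j - 1) * D (X * u)) := by
      rw [mul_pow]; ring
    rw [h1, coeff_X_pow_mul', if_pos (by omega : j - 1 ≤ n - 1)]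
    have h2 : n - 1 - (j - 1) = n - j := by omega
    rw [h2]
  -- step 4 : u^(j-1) = u^n * v^(n+1-j)
  have s4 : u ^ (j - 1) * D (X * u) = u ^ n * (u⁻¹ ^ (n + 1 - j) * D (X * u)) := by
    have h1 : u ^ n * u⁻¹ ^ (n + 1 - j) = u ^ (j - 1) := by
      have h2 : u ^ n = u ^ (j - 1) * u ^ (n + 1 - j) := by
        rw [← pow_add]; congr 1; omega
      rw [h2, mul_assoc, ← mul_pow, PowerSeries.mul_inv_cancel u hne, one_pow, mul_one]
    calc u ^ (j - 1) * D (X * u) = (u ^ n * u⁻¹ ^ (n + 1 - j)) * D (X * u) := by rw [h1]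
      _ = u ^ n * (u⁻¹ ^ (n + 1 - j) * D (X * u)) := by ring
  -- step 5 : expand using the hypothesis and coeff_subw_mul
  have s5 : coeff (n - j) (u ^ n * (u⁻¹ ^ (n + 1 - j) * D (X * u))) =
      ∑ i ∈ range (n - j + 1),
        coeff i Fser * coeff (n - j) ((X * u) ^ i * (u⁻¹ ^ (n + 1 - j) * D (X * u))) := by
    rw [hser, coeff_subw_mul hXu0]
  -- step 6 : the inner coefficients are delta functions
  have s6 : ∀ i ∈ range (n - j + 1),
      coeff (n - j) ((X * u) ^ i * (u⁻¹ ^ (n + 1 - j) * D (X * u))) =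
        if i = n - j then 1 else 0 := by
    intro i hi
    rw [mem_range] at hi
    have hinj : i ≤ n - j := by omega
    have h1 : (X * u) ^ i * (u⁻¹ ^ (n + 1 - j) * D (X * u)) =
        X ^ i * (u ^ i * (u⁻¹ ^ (n + 1 - j) * D (X * u))) := by
      rw [mul_pow]; ring
    rw [h1, coeff_X_pow_mul', if_pos hinj]
    have h2 : u ^ i * (u⁻¹ ^ (n + 1 - j) * D (X * u)) =
        u⁻¹ ^ (n + 1 - j - i) * D (X * u) := by
      have h3 : u⁻¹ ^ (n + 1 - j) = u⁻¹ ^ (n + 1 - j - i) * u⁻¹ ^ i := by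
        rw [← pow_add]; congr 1; omega
      calc u ^ i * (u⁻¹ ^ (n + 1 - j) * D (X * u))
          = (u * u⁻¹) ^ i * (u⁻¹ ^ (n + 1 - j - i) * D (X * u)) := by
            rw [h3, mul_pow]; ring
        _ = u⁻¹ ^ (n + 1 - j - i) * D (X * u) := by
            rw [PowerSeries.mul_inv_cancel u hne, one_pow, one_mul]
    rw [h2]
    rcases eq_or_lt_of_le hinj with heq | hlt
    · rw [if_pos heq]
      have h4 : n + 1 - j - i = 1 := by omega
      have h5 : n - j - i = 0 := by omega
      rw [h4, h5, pow_one]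
      exact delta_one hu
    · rw [if_neg (by omega)]
      have h4 : n + 1 - j - i = (n - j - i - 1) + 2 := by omega
      have h5 : n - j - i = (n - j - i - 1) + 1 := by omega
      rw [h4, h5]
      exact delta_two hu _
  -- assemble
  rw [s1, s2, s3, s4, s5, Finset.sum_congr rfl fun i hi => by rw [s6 i hi]]
  simp only [mul_ite, mul_one, mul_zero]
  rw [Finset.sum_ite_eq' (range (n - j + 1)) (n - j) (fun i => coeff i Fser),
    if_pos (by rw [mem_range]; omega)]

/-! ### The two algebraic power series -/

noncomputable def gS : S := fix (fun u => 1 + X * u ^ 5)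

noncomputable def hS : S := fix (fun u => 1 + X * (u ^ 2 - X * u ^ 3 + X ^ 2 * u ^ 4))

theorem contr_g : IsContr (fun u => 1 + X * u ^ 5) := by
  intro k a b hab
  exact (Agree.refl (k + 1) 1).add ((hab.pow 5).xmul)

theorem contr_h : IsContr (fun u => 1 + X * (u ^ 2 - X * u ^ 3 + X ^ 2 * u ^ 4)) := by
  intro k a b hab
  refine (Agree.refl (k + 1) 1).add (Agree.xmul ?_)
  exact (((hab.pow 2).sub ((Agree.refl k X).mul (hab.pow 3))).add
    ((Agree.refl k (X ^ 2)).mul (hab.pow 4)))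

theorem Eg : gS = 1 + X * gS ^ 5 := fix_eq contr_g

theorem Eh : hS = 1 + X * hS ^ 2 - X ^ 2 * hS ^ 3 + X ^ 3 * hS ^ 4 := by
  have h := fix_eq contr_h
  rw [← hS] at h
  linear_combination h

theorem cg0 : constantCoeff gS = 1 := by
  conv_lhs => rw [Eg]
  simp

theorem ch0 : constantCoeff hS = 1 := by
  conv_lhs => rw [Eh]
  simp

/-- the key quadratic-free relation: `q * h = 1` -/
theorem qh : (1 - X * hS + X ^ 2 * hS ^ 2 - X ^ 3 * hS ^ 3) * hS = 1 := by
  linear_combination Eh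

theorem hS_ne : hS ≠ 0 := by
  intro h
  have := ch0
  rw [h, map_zero] at this
  exact zero_ne_one this

/-- `E1'` : the quintic equation, derived from the quartic one by algebra -/
theorem E1 : (1 - X) * hS = 1 + X ^ 4 * hS ^ 5 := by
  have h0 : (1 - X * hS + X ^ 2 * hS ^ 2 - X ^ 3 * hS ^ 3) * hS - 1 = 0 := by
    rw [qh]; ring
  have key : (X : S) ^ 3 * ((1 - X) * hS - X ^ 4 * hS ^ 5 - 1) =
      (X ^ 3 + X ^ 4 * hS) * ((1 - X * hS + X ^ 2 * hS ^ 2 - X ^ 3 * hS ^ 3) * hS - 1) := by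
    ring
  rw [h0, mul_zero] at key
  have hX3 : (X : S) ^ 3 ≠ 0 := pow_ne_zero _ X_ne_zero
  have h2 := (mul_eq_zero.1 key).resolve_left hX3
  linear_combination h2

noncomputable def inv1X (d : ℕ) : S := ((invOneSubPow ℚ d : (PowerSeries ℚ)ˣ) : S)

theorem inv1X_mul (d : ℕ) : inv1X d * (1 - X) ^ d = 1 := by
  rw [inv1X, ← invOneSubPow_inv_eq_one_sub_pow]
  exact (invOneSubPow ℚ d).val_inv

noncomputable def Y : S := X ^ 4 * inv1X 5

theorem cY0 : constantCoeff Y = 0 := by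
  rw [Y, map_mul, map_pow, constantCoeff_X]
  norm_num

theorem contr_Y : IsContr (fun u => 1 + X * (X ^ 3 * inv1X 5 * u ^ 5)) := by
  intro k a b hab
  exact (Agree.refl (k + 1) 1).add ((Agree.constMul _ (hab.pow 5)).xmul)

theorem hs_fix : (1 - X) * hS = 1 + X * (X ^ 3 * inv1X 5 * ((1 - X) * hS) ^ 5) := by
  have expand : X * (X ^ 3 * inv1X 5 * ((1 - X) * hS) ^ 5) =
      (inv1X 5 * (1 - X) ^ 5) * (X ^ 4 * hS ^ 5) := by ring
  rw [expand, inv1X_mul, one_mul]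
  exact E1

theorem sub2g_fix : subw Y gS = 1 + X * (X ^ 3 * inv1X 5 * (subw Y gS) ^ 5) := by
  conv_lhs => rw [Eg]
  rw [subw_add cY0, subw_one cY0, subw_mul cY0, subw_X cY0, subw_pow cY0]
  rw [Y]
  ring

theorem sub2g_eq : subw Y gS = (1 - X) * hS :=
  fix_unique contr_Y sub2g_fix hs_fix

theorem hm_eq (m : ℕ) : hS ^ m = inv1X m * subw Y (gS ^ m) := by
  rw [subw_pow cY0, sub2g_eq, mul_pow]
  calc hS ^ m = (inv1X m * (1 - X) ^ m) * hS ^ m := by rw [inv1X_mul, one_mul]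
    _ = inv1X m * ((1 - X) ^ m * hS ^ m) := by ring

/-! ### Coefficients of `gS ^ m` : Fuss–Catalan numbers -/

theorem coeff_one_add_X_pow (M k : ℕ) : coeff k ((1 + X : S) ^ M) = (M.choose k : ℚ) := by
  have h1 : ((1 + X : S)) = ((Polynomial.X + 1 : Polynomial ℚ) : S) := by
    rw [Polynomial.coe_add, Polynomial.coe_X, Polynomial.coe_one, add_comm]
  rw [h1, ← Polynomial.coe_pow, Polynomial.coeff_coe, Polynomial.coeff_X_add_one_pow]

theorem hw0_g : constantCoeff (X * gS ^ 5) = 0 := by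
  rw [map_mul, constantCoeff_X, zero_mul]

theorem hser_g (p : ℕ) : (gS ^ 5) ^ p = subw (X * gS ^ 5) ((1 + X) ^ (5 * p)) := by
  rw [subw_pow hw0_g, subw_add hw0_g, subw_one hw0_g, subw_X hw0_g, ← Eg, ← pow_mul]

theorem core_g (p j : ℕ) (h1 : 1 ≤ j) (h2 : j ≤ p) :
    (p : ℚ) * coeff p ((X * gS ^ 5) ^ j) = j * ((5 * p).choose (p - j) : ℚ) := by
  have hu1 : constantCoeff (gS ^ 5) = 1 := by rw [map_pow, cg0, one_pow]
  have hc := core (gS ^ 5) hu1 ((1 + X) ^ (5 * p)) p j h1 h2 (hser_g p)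
  rw [coeff_one_add_X_pow] at hc
  exact hc

theorem coeff_g_pow (m p : ℕ) (hm : 1 ≤ m) (hp : 1 ≤ p) :
    (p : ℚ) * coeff p (gS ^ m) = (m : ℚ) * ((5 * p + m - 1).choose (p - 1) : ℚ) := by
  have hbin : gS ^ m = ∑ j ∈ range (m + 1),
      PowerSeries.C ((m.choose j : ℚ)) * (X * gS ^ 5) ^ j := by
    have hg : gS = X * gS ^ 5 + 1 := by conv_lhs => rw [Eg]; rw [add_comm]
    conv_lhs => rw [hg]
    rw [add_pow]
    refine Finset.sum_congr rfl fun j hj => ?_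
    rw [one_pow, mul_one, ← map_natCast (PowerSeries.C) (m.choose j)]
    ring
  have hcoeff : coeff p (gS ^ m) =
      ∑ j ∈ range (m + 1), (m.choose j : ℚ) * coeff p ((X * gS ^ 5) ^ j) := by
    rw [hbin, map_sum]
    exact Finset.sum_congr rfl fun j _ => by rw [coeff_C_mul]
  -- define the common summand
  set T : ℕ → ℚ := fun j => if 1 ≤ j ∧ j ≤ p then
      (m.choose j : ℚ) * j * ((5 * p).choose (p - j) : ℚ) else 0 with hT
  have hterm : ∀ j ∈ range (m + 1),
      (p : ℚ) * ((m.choose j : ℚ) * coeff p ((X * gS ^ 5) ^ j)) = T j := by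
    intro j _
    simp only [hT]
    rcases Nat.eq_zero_or_pos j with rfl | hj1
    · have h0 : coeff p ((X * gS ^ 5) ^ 0) = 0 := by
        rw [pow_zero, coeff_one, if_neg (by omega)]
      rw [h0, if_neg (by omega)]
      ring
    rcases le_or_gt j p with hjp | hjp
    · rw [if_pos (show 1 ≤ j ∧ j ≤ p from ⟨hj1, hjp⟩)]
      have hc := core_g p j hj1 hjp
      calc (p : ℚ) * ((m.choose j : ℚ) * coeff p ((X * gS ^ 5) ^ j))
          = (m.choose j : ℚ) * ((p : ℚ) * coeff p ((X * gS ^ 5) ^ j)) := by ring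
        _ = (m.choose j : ℚ) * ((j : ℚ) * ((5 * p).choose (p - j) : ℚ)) := by rw [hc]
        _ = (m.choose j : ℚ) * j * ((5 * p).choose (p - j) : ℚ) := by ring
    · rw [coeff_pow_eq_zero hw0_g hjp, if_neg (by omega), mul_zero, mul_zero]
  have hsum1 : (p : ℚ) * coeff p (gS ^ m) = ∑ j ∈ range (m + 1), T j := by
    rw [hcoeff, Finset.mul_sum]
    exact Finset.sum_congr rfl hterm
  -- extend / shrink the summation range to `range (p+1)`
  have hTzero_gt_p : ∀ j, p < j → T j = 0 := by
    intro j hj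
    simp only [hT]
    rw [if_neg (by omega)]
  have hTzero_gt_m : ∀ j, m < j → T j = 0 := by
    intro j hj
    simp only [hT]
    rcases le_or_gt j p with h | h
    · rw [Nat.choose_eq_zero_of_lt hj]
      split <;> simp
    · rw [if_neg (by omega)]
  have hsum2 : ∑ j ∈ range (m + 1), T j = ∑ j ∈ range (p + 1), T j := by
    rcases le_total m p with h | h
    · refine Finset.sum_subset (by intro x hx; rw [mem_range] at *; omega) ?_
      intro j hj hnj
      rw [mem_range] at hj hnj
      exact hTzero_gt_m j (by omega)
    · refine (Finset.sum_subset (by intro x hx; rw [mem_range] at *; omega) ?_).symm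
      intro j hj hnj
      rw [mem_range] at hj hnj
      exact hTzero_gt_p j (by omega)
  -- kill the j = 0 term and reindex
  have hsum3 : ∑ j ∈ range (p + 1), T j = ∑ l ∈ range p, T (l + 1) := by
    rw [Finset.sum_range_succ']
    have : T 0 = 0 := by simp only [hT]; rw [if_neg (by omega)]
    rw [this, add_zero]
  -- Vandermonde
  have hvdm : ((m - 1) + 5 * p).choose (p - 1) =
      ∑ l ∈ range p, (m - 1).choose l * (5 * p).choose (p - 1 - l) := by
    rw [Nat.add_choose_eq, Finset.Nat.sum_antidiagonal_eq_sum_range_succ_mk]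
    have hp1 : (p - 1).succ = p := by omega
    rw [hp1]
  have hfinal : ∑ l ∈ range p, T (l + 1)
      = (m : ℚ) * (((m - 1) + 5 * p).choose (p - 1) : ℚ) := by
    rw [hvdm]
    push_cast
    rw [Finset.mul_sum]
    refine Finset.sum_congr rfl fun l hl => ?_
    rw [mem_range] at hl
    simp only [hT]
    rw [if_pos (show 1 ≤ l + 1 ∧ l + 1 ≤ p from ⟨by omega, by omega⟩)]
    -- m * C(m-1, l) = (l+1) * C(m, l+1)
    have hn : m - 1 + 1 = m := by omega
    have hnat : m * (m - 1).choose l = (m.choose (l + 1)) * (l + 1) := by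
      have h6 := Nat.add_one_mul_choose_eq (m - 1) l
      simp only [Nat.succ_eq_add_one, hn] at h6
      exact h6
    have hcast : (m : ℚ) * ((m - 1).choose l : ℚ) = (m.choose (l + 1) : ℚ) * ((l : ℚ) + 1) := by
      exact_mod_cast congrArg (Nat.cast (R := ℚ)) hnat
    have hidx : p - (l + 1) = p - 1 - l := by omega
    rw [hidx]
    push_cast
    linear_combination (-((5 * p).choose (p - 1 - l) : ℚ)) * hcast
  have he : m - 1 + 5 * p = 5 * p + m - 1 := by omega
  rw [hsum1, hsum2, hsum3, hfinal, he]

/-! ### The left-hand side : coefficients of `hS ^ m` -/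

theorem cancel_right {a b c : S} (hc : c ≠ 0) (h1 : a * c = 1) (h2 : b * c = 1) : a = b := by
  have h3 : (a - b) * c = 0 := by linear_combination h1 - h2
  rcases mul_eq_zero.1 h3 with h4 | h4
  · linear_combination h4
  · exact absurd h4 hc

theorem one_sub_X_pow_ne (d : ℕ) : ((1 - X : S)) ^ d ≠ 0 := by
  intro h
  have h1 : constantCoeff ((1 - X : S) ^ d) = 1 := by
    rw [map_pow, map_sub, map_one, constantCoeff_X, sub_zero, one_pow]
  rw [h, map_zero] at h1
  exact zero_ne_one h1

theorem coeff_inv1X (d k : ℕ) (hd : 0 < d) :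
    coeff k (inv1X d) = (((d - 1 + k).choose (d - 1) : ℕ) : ℚ) := by
  rw [inv1X, invOneSubPow_val_eq_mk_sub_one_add_choose_of_pos (S := ℚ) (d := d) hd, coeff_mk]

theorem inv1X_add (a b : ℕ) : inv1X a * inv1X b = inv1X (a + b) := by
  refine cancel_right (one_sub_X_pow_ne (a + b)) ?_ (inv1X_mul (a + b))
  rw [pow_add]
  calc inv1X a * inv1X b * ((1 - X) ^ a * (1 - X) ^ b)
      = (inv1X a * (1 - X) ^ a) * (inv1X b * (1 - X) ^ b) := by ring
    _ = 1 := by rw [inv1X_mul, inv1X_mul, one_mul]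

theorem inv1X_pow (a p : ℕ) : inv1X a ^ p = inv1X (a * p) := by
  refine cancel_right (one_sub_X_pow_ne (a * p)) ?_ (inv1X_mul (a * p))
  rw [pow_mul, ← mul_pow, inv1X_mul, one_pow]

theorem Y_pow_inv (p m : ℕ) : Y ^ p * inv1X m = X ^ (4 * p) * inv1X (5 * p + m) := by
  rw [Y, mul_pow, ← pow_mul, inv1X_pow, mul_assoc, inv1X_add]

theorem coeff_hm (m n : ℕ) :
    coeff n (hS ^ m) =
      ∑ p ∈ range (n + 1), coeff p (gS ^ m) * coeff n (Y ^ p * inv1X m) := by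
  rw [hm_eq m, mul_comm, coeff_subw_mul cY0]

theorem Lside (m n : ℕ) (hm : 1 ≤ m) :
    coeff n (hS ^ m) = ∑ p ∈ range (n / 4 + 1),
      (m : ℚ) / (5 * p + m) * (((5 * p + m).choose p : ℕ) : ℚ) *
        (((n + p + m - 1).choose (n - 4 * p) : ℕ) : ℚ) := by
  rw [coeff_hm]
  -- restrict the range
  have hsub : ∑ p ∈ range (n + 1), coeff p (gS ^ m) * coeff n (Y ^ p * inv1X m) =
      ∑ p ∈ range (n / 4 + 1), coeff p (gS ^ m) * coeff n (Y ^ p * inv1X m) := by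
    refine (Finset.sum_subset ?_ ?_).symm
    · intro x hx
      rw [mem_range] at *
      have := Nat.div_le_self n 4
      omega
    · intro p hp hnp
      rw [mem_range] at hp hnp
      have h4p : ¬(4 * p ≤ n) := by
        intro hc
        exact hnp (by omega)
      rw [Y_pow_inv, coeff_X_pow_mul', if_neg h4p, mul_zero]
  rw [hsub]
  refine Finset.sum_congr rfl fun p hp => ?_
  rw [mem_range] at hp
  have h4p : 4 * p ≤ n := by
    have hple : p ≤ n / 4 := by omega
    calc 4 * p = p * 4 := by ring
      _ ≤ n := (Nat.le_div_iff_mul_le (by norm_num)).1 hple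
  rw [Y_pow_inv, coeff_X_pow_mul', if_pos h4p, coeff_inv1X _ _ (by omega)]
  -- binomial bookkeeping
  have hidx : 5 * p + m - 1 + (n - 4 * p) = n + p + m - 1 := by omega
  have hsymm : (n + p + m - 1).choose (5 * p + m - 1) = (n + p + m - 1).choose (n - 4 * p) := by
    have h1 : 5 * p + m - 1 ≤ n + p + m - 1 := by omega
    have h2 : n + p + m - 1 - (5 * p + m - 1) = n - 4 * p := by omega
    rw [← h2, Nat.choose_symm h1]
  rw [hidx, hsymm]
  -- now the Fuss–Catalan coefficient
  rcases Nat.eq_zero_or_pos p with rfl | hp1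
  · have hc0 : coeff 0 (gS ^ m) = 1 := by
      rw [coeff_zero_eq_constantCoeff, map_pow, cg0, one_pow]
    rw [hc0]
    have hm0 : ((m : ℚ)) ≠ 0 := by
      exact_mod_cast Nat.pos_iff_ne_zero.1 hm
    rw [Nat.choose_zero_right]
    push_cast
    rw [mul_zero, zero_add, div_self hm0]
    ring
  · have hgp := coeff_g_pow m p hm hp1
    have hp0 : ((p : ℚ)) ≠ 0 := by exact_mod_cast Nat.pos_iff_ne_zero.1 hp1
    have hcp : coeff p (gS ^ m) = (m : ℚ) * ((5 * p + m - 1).choose (p - 1) : ℚ) / p := by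
      field_simp
      linear_combination hgp
    rw [hcp]
    -- p * C(5p+m, p) = (5p+m) * C(5p+m-1, p-1)
    have hnat2 : (5 * p + m) * ((5 * p + m - 1).choose (p - 1)) = (5 * p + m).choose p * p := by
      have h := Nat.add_one_mul_choose_eq (5 * p + m - 1) (p - 1)
      have e1 : 5 * p + m - 1 + 1 = 5 * p + m := by omega
      have e2 : p - 1 + 1 = p := by omega
      rw [e1, e2] at h
      exact h
    have hcast2 : ((5 * p + m : ℕ) : ℚ) * ((5 * p + m - 1).choose (p - 1) : ℚ)
        = ((5 * p + m).choose p : ℚ) * p := by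
      exact_mod_cast congrArg (Nat.cast (R := ℚ)) hnat2
    have hden : (5 * (p : ℚ) + m) ≠ 0 := by
      have hmq : (0 : ℚ) < m := by exact_mod_cast hm
      have hpq : (0 : ℚ) ≤ p := by positivity
      positivity
    push_cast at hcast2
    field_simp
    linear_combination ((n + p + m - 1).choose (n - 4 * p) : ℚ) * hcast2

/-! ### The right-hand side -/

theorem cmX2 : constantCoeff (-(X ^ 2) : S) = 0 := by
  rw [map_neg, map_pow, constantCoeff_X]
  norm_num

noncomputable def Bser (N : ℕ) : S := subw (-(X ^ 2)) (inv1X N)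

theorem Bser_mul (N : ℕ) : Bser N * (1 + X ^ 2) ^ N = 1 := by
  have h2 : ((1 + X ^ 2 : S)) ^ N = subw (-(X ^ 2)) ((1 - X) ^ N) := by
    rw [subw_pow cmX2, subw_sub cmX2, subw_one cmX2, subw_X cmX2, sub_neg_eq_add]
  rw [Bser, h2, ← subw_mul cmX2, inv1X_mul, subw_one cmX2]

theorem neg_X_sq_pow (i : ℕ) : ((-(X ^ 2) : S)) ^ i = PowerSeries.C ((-1 : ℚ) ^ i) * X ^ (2 * i) := by
  rw [neg_pow, ← pow_mul, map_pow, map_neg, map_one]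

theorem coeff_Bser_even (N p : ℕ) (hN : 0 < N) :
    coeff (2 * p) (Bser N) = (-1 : ℚ) ^ p * ((N - 1 + p).choose (N - 1) : ℚ) := by
  rw [Bser, coeff_subw _ _ _ cmX2]
  rw [Finset.sum_eq_single p]
  · rw [neg_X_sq_pow, coeff_C_mul, coeff_X_pow, if_pos rfl, mul_one,
      coeff_inv1X _ _ hN]
    ring
  · intro i _ hip
    rw [neg_X_sq_pow, coeff_C_mul, coeff_X_pow, if_neg (by omega), mul_zero, mul_zero]
  · intro hp
    rw [mem_range] at hp
    omega

theorem coeff_Bser_odd (N k : ℕ) (hk : k % 2 = 1) : coeff k (Bser N) = 0 := by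
  rw [Bser, coeff_subw _ _ _ cmX2]
  refine Finset.sum_eq_zero fun i _ => ?_
  rw [neg_X_sq_pow, coeff_C_mul, coeff_X_pow, if_neg (by omega), mul_zero, mul_zero]

noncomputable def Fser (N : ℕ) : S := inv1X N * Bser N

theorem q_pow_F (N : ℕ) : ((1 - X + X ^ 2 - X ^ 3 : S)) ^ N * Fser N = 1 := by
  have hfac : ((1 - X + X ^ 2 - X ^ 3 : S)) = (1 - X) * (1 + X ^ 2) := by ring
  rw [hfac, mul_pow, Fser]
  calc (1 - X : S) ^ N * (1 + X ^ 2) ^ N * (inv1X N * Bser N)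
      = (inv1X N * (1 - X) ^ N) * (Bser N * (1 + X ^ 2) ^ N) := by ring
    _ = 1 := by rw [inv1X_mul, Bser_mul, one_mul]

theorem hw0_h : constantCoeff (X * hS) = 0 := by
  rw [map_mul, constantCoeff_X, zero_mul]

theorem subw_q : subw (X * hS) ((1 - X + X ^ 2 - X ^ 3 : S)) =
    1 - X * hS + (X * hS) ^ 2 - (X * hS) ^ 3 := by
  rw [show ((1 - X + X ^ 2 - X ^ 3 : S)) = (1 - X + X ^ 2) - X ^ 3 by ring,
    subw_sub hw0_h, subw_add hw0_h, subw_sub hw0_h, subw_one hw0_h,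
    subw_pow hw0_h, subw_pow hw0_h, subw_X hw0_h]

theorem subw_q_mul_h : subw (X * hS) ((1 - X + X ^ 2 - X ^ 3 : S)) * hS = 1 := by
  rw [subw_q]
  linear_combination qh

theorem hser_h (N : ℕ) : hS ^ N = subw (X * hS) (Fser N) := by
  have hq_ne : subw (X * hS) ((1 - X + X ^ 2 - X ^ 3 : S)) ≠ 0 :=
    left_ne_zero_of_mul_eq_one subw_q_mul_h
  have hc : (subw (X * hS) ((1 - X + X ^ 2 - X ^ 3 : S))) ^ N ≠ 0 := pow_ne_zero _ hq_ne
  refine (cancel_right hc ?_ ?_).symm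
  · have h1 := q_pow_F N
    have h2 : subw (X * hS) (((1 - X + X ^ 2 - X ^ 3 : S)) ^ N * Fser N) = subw (X * hS) 1 := by
      rw [h1]
    rw [subw_mul hw0_h, subw_pow hw0_h, subw_one hw0_h] at h2
    linear_combination h2
  · rw [← mul_pow, mul_comm hS, subw_q_mul_h, one_pow]

theorem Rcore (m n : ℕ) (hm : 1 ≤ m) :
    coeff n (hS ^ m) = (m : ℚ) / (m + n) * coeff n (Fser (m + n)) := by
  have hser' : hS ^ (n + m) = subw (X * hS) (Fser (m + n)) := by
    rw [show n + m = m + n by omega]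
    exact hser_h (m + n)
  have hc := core hS ch0 (Fser (m + n)) (n + m) m hm (by omega) hser'
  have hx : coeff (n + m) ((X * hS) ^ m) = coeff n (hS ^ m) := by
    rw [mul_pow, coeff_X_pow_mul', if_pos (by omega : m ≤ n + m),
      show n + m - m = n from by omega]
  rw [hx, show n + m - m = n by omega] at hc
  have hmn : ((m : ℚ) + n) ≠ 0 := by
    have h1 : (1 : ℚ) ≤ (m : ℚ) := by exact_mod_cast hm
    have h2 : (0 : ℚ) ≤ (n : ℚ) := Nat.cast_nonneg n
    intro h; linarith
  push_cast at hc
  rw [div_mul_eq_mul_div, eq_div_iff hmn]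
  linear_combination hc

theorem coeff_F (N n : ℕ) (hN : 0 < N) :
    coeff n (Fser N) = ∑ p ∈ range (n / 2 + 1),
      (-1 : ℚ) ^ p * ((N - 1 + p).choose (N - 1) : ℚ) *
        ((N - 1 + (n - 2 * p)).choose (N - 1) : ℚ) := by
  rw [Fser, mul_comm, coeff_mul, Finset.Nat.sum_antidiagonal_eq_sum_range_succ_mk]
  have himg : ∑ k ∈ range (n + 1), coeff k (Bser N) * coeff (n - k) (inv1X N)
      = ∑ k ∈ (range (n / 2 + 1)).image (fun p => 2 * p),
          coeff k (Bser N) * coeff (n - k) (inv1X N) := by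
    refine (Finset.sum_subset ?_ ?_).symm
    · intro x hx
      simp only [Finset.mem_image, mem_range] at hx
      obtain ⟨p, hp, rfl⟩ := hx
      rw [mem_range]
      omega
    · intro k hk hnk
      rw [mem_range] at hk
      have hkodd : k % 2 = 1 := by
        rcases Nat.mod_two_eq_zero_or_one k with h | h
        · exfalso
          apply hnk
          simp only [Finset.mem_image, mem_range]
          exact ⟨k / 2, by omega, by omega⟩
        · exact h
      rw [coeff_Bser_odd N k hkodd, zero_mul]
  rw [himg, Finset.sum_image (by intro a _ b _ h; simp only at h; omega)]
  refine Finset.sum_congr rfl fun p hp => ?_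
  rw [coeff_Bser_even N p hN, coeff_inv1X _ _ hN]

theorem Rside (m n : ℕ) (hm : 1 ≤ m) :
    coeff n (hS ^ m) = ∑ p ∈ range (n / 2 + 1),
      (-1 : ℚ) ^ p * ((m : ℚ) / (m + n)) * ((m + n + p - 1).choose p : ℚ) *
        ((m + 2 * n - 2 * p - 1).choose (n - 2 * p) : ℚ) := by
  rw [Rcore m n hm, coeff_F (m + n) n (by omega), Finset.mul_sum]
  refine Finset.sum_congr rfl fun p hp => ?_
  rw [mem_range] at hp
  have hple : p ≤ n / 2 := by omega
  have h2p : 2 * p ≤ n := by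
    calc 2 * p = p * 2 := by ring
      _ ≤ n := (Nat.le_div_iff_mul_le (by norm_num)).1 hple
  have e1 : (m + n - 1 + p).choose (m + n - 1) = (m + n + p - 1).choose p := by
    calc (m + n - 1 + p).choose (m + n - 1)
        = (m + n - 1 + p).choose ((m + n - 1 + p) - p) := by congr 1; omega
      _ = (m + n - 1 + p).choose p := Nat.choose_symm (by omega)
      _ = (m + n + p - 1).choose p := by congr 2; omega
  have e2 : (m + n - 1 + (n - 2 * p)).choose (m + n - 1)
      = (m + 2 * n - 2 * p - 1).choose (n - 2 * p) := by
    calc (m + n - 1 + (n - 2 * p)).choose (m + n - 1)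
        = (m + n - 1 + (n - 2 * p)).choose ((m + n - 1 + (n - 2 * p)) - (n - 2 * p)) := by
          congr 1; omega
      _ = (m + n - 1 + (n - 2 * p)).choose (n - 2 * p) := Nat.choose_symm (by omega)
      _ = (m + 2 * n - 2 * p - 1).choose (n - 2 * p) := by congr 2; omega
  rw [e1, e2]
  ring

end SunAux

/-- **Sun's identity for generalized Catalan numbers `C_{m,5}`** (Formula (1)).
For all positive integers `m` and nonnegative integers `n`,
`∑_{p=0}^{⌊n/4⌋} (m/(5p+m)) C(5p+m, p) C(n+p+m-1, n-4p)
  = ∑_{p=0}^{⌊n/2⌋} (-1)^p (m/(m+n)) C(m+n+p-1, p) C(m+2n-2p-1, n-2p)`. -/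
theorem sun_identity_general (m : ℕ) (hm : 0 < m) (n : ℕ) :
    ∑ p ∈ Finset.range (n / 4 + 1),
        (m : ℚ) / (5 * p + m) * ((5 * p + m).choose p) * ((n + p + m - 1).choose (n - 4 * p)) =
      ∑ p ∈ Finset.range (n / 2 + 1),
        (-1 : ℚ) ^ p * (m / (m + n)) * ((m + n + p - 1).choose p) *
          ((m + 2 * n - 2 * p - 1).choose (n - 2 * p)) := by
  have hL := SunAux.Lside m n hm
  have hR := SunAux.Rside m n hm
  rw [← hL, ← hR]
end

section
/- For every nonnegative integer n, there exists an involution \phi on the set of improper colored binary trees with n internal vertices such that for every improper colored binary tree B, the color number of \phi(B) differs from the color number of B by exactly 1 (in particular \phi reverses the parity of the color number). Consequently, |ECB_n| - |OCB_n| = |CB'_n|, where ECB_n (resp. OCB_n) is the set of colored binary trees with n internal vertices whose color number is even (resp. odd), and CB'_n is the set of proper colored binary trees with n internal vertices. -/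
/-- A complete binary tree: every internal vertex has exactly a left and a right child. -/
inductive BinTree : Type
  | leaf : BinTree
  | node : BinTree → BinTree → BinTree

namespace BinTree

/-- The number of internal vertices of a complete binary tree. -/
def internals : BinTree → ℕ
  | leaf => 0
  | node l r => internals l + internals r + 1

/-- The subtree rooted at the vertex reached from the root by the given path,
where `false` means "go to the left child" and `true` means "go to the right child";
`none` if there is no such vertex. -/
def subtreeAt : BinTree → List Bool → Option BinTree
  | t, [] => some t
  | leaf, _ :: _ => none
  | node l _, false :: p => subtreeAt l p
  | node _ r, true :: p => subtreeAt r p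

/-- The list of (the paths from the root to) all vertices of a complete binary tree. -/
def vertices : BinTree → List (List Bool)
  | leaf => [[]]
  | node l r =>
      [] :: ((vertices l).map (List.cons false) ++ (vertices r).map (List.cons true))

/-- The length of the maximal L-path starting at the root, i.e. the length of the
leftmost path of the tree. -/
def leftLen : BinTree → ℕ
  | leaf => 0
  | node l _ => leftLen l + 1

/-- `p` is (the path from the root to) an *initial vertex* of `t`: it is a vertex of `t`
which is not the left child of its father (it is the root or a right child), so it is the
starting vertex of a maximal L-path. -/
def IsInitial (t : BinTree) (p : List Bool) : Prop :=
  (subtreeAt t p).isSome ∧ (p = [] ∨ p.getLast? = some true)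

/-- The length `l(v)` of the associated maximal L-path of the vertex `v` at path `p`
(junk value `0` if `p` is not a vertex of `t`). -/
def pathLen (t : BinTree) (p : List Bool) : ℕ :=
  match subtreeAt t p with
  | some s => leftLen s
  | none => 0

end BinTree

/-- A colored binary tree: a complete binary tree together with an assignment of a color
`c(v)` with `0 ≤ c(v) ≤ ⌊l(v)/2⌋` to each initial vertex `v` (vertices which are not
initial carry the junk color `0`). -/
structure ColoredBinTree : Type where
  /-- the underlying complete binary tree -/
  tree : BinTree
  /-- the color of each vertex (indexed by the path from the root) -/
  color : List Bool → ℕ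
  color_le : ∀ p, BinTree.IsInitial tree p → color p ≤ BinTree.pathLen tree p / 2
  color_eq_zero : ∀ p, ¬ BinTree.IsInitial tree p → color p = 0

namespace ColoredBinTree

/-- The color number of a colored binary tree: the sum of the colors of its
initial vertices. -/
def colorNum (B : ColoredBinTree) : ℕ :=
  ((B.tree.vertices).map B.color).sum

/-- The initial vertex at path `p` is *proper*: its color is `2k` and the length of its
associated maximal L-path is `4k` or `4k+1` for some nonnegative integer `k`. -/
def ProperAt (B : ColoredBinTree) (p : List Bool) : Prop :=
  ∃ k : ℕ, B.color p = 2 * k ∧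
    (BinTree.pathLen B.tree p = 4 * k ∨ BinTree.pathLen B.tree p = 4 * k + 1)

/-- A colored binary tree is *proper* if all its initial vertices are proper. -/
def Proper (B : ColoredBinTree) : Prop :=
  ∀ p, BinTree.IsInitial B.tree p → B.ProperAt p

end ColoredBinTree


/-! ### Auxiliary development -/

namespace BinTree

lemma mem_vertices {t : BinTree} {p : List Bool} :
    p ∈ t.vertices ↔ (t.subtreeAt p).isSome := by
  induction t generalizing p with
  | leaf => cases p with
    | nil => simp [vertices, subtreeAt]
    | cons b q => simp [vertices, subtreeAt]
  | node l r ihl ihr =>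
    cases p with
    | nil => simp [vertices, subtreeAt]
    | cons b q => cases b <;> simp [vertices, subtreeAt, ihl, ihr]

lemma nodup_vertices (t : BinTree) : t.vertices.Nodup := by
  induction t with
  | leaf => simp [vertices]
  | node l r ihl ihr =>
    simp only [vertices, List.nodup_cons, List.mem_append, List.mem_map]
    refine ⟨?_, ?_⟩
    · rintro (⟨a, -, h⟩ | ⟨a, -, h⟩) <;> simp at h
    · refine List.Nodup.append (ihl.map fun a b h => by injection h)
        (ihr.map fun a b h => by injection h) ?_
      intro x hx hy
      obtain ⟨a, -, rfl⟩ := List.mem_map.mp hx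
      obtain ⟨b, -, h⟩ := List.mem_map.mp hy
      simp at h

lemma length_vertices (t : BinTree) : t.vertices.length = 2 * t.internals + 1 := by
  induction t with
  | leaf => simp [vertices, internals]
  | node l r ihl ihr => simp [vertices, internals, ihl, ihr]; omega

lemma leftLen_le_internals (t : BinTree) : t.leftLen ≤ t.internals := by
  induction t with
  | leaf => simp [leftLen, internals]
  | node l r ihl ihr => simp only [leftLen, internals]; omega

lemma internals_subtreeAt : ∀ {p : List Bool} {t s : BinTree},
    t.subtreeAt p = some s → s.internals ≤ t.internals := by
  intro p
  induction p with
  | nil => intro t s h; simp [subtreeAt] at h; subst h; exact le_refl _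
  | cons b q ih =>
    intro t s h
    cases t with
    | leaf => simp [subtreeAt] at h
    | node l r =>
      cases b with
      | false =>
        simp only [subtreeAt] at h
        have := ih h; simp [internals]; omega
      | true =>
        simp only [subtreeAt] at h
        have := ih h; simp [internals]; omega

lemma pathLen_le_internals (t : BinTree) (p : List Bool) : t.pathLen p ≤ t.internals := by
  unfold pathLen
  cases h : t.subtreeAt p with
  | none => exact Nat.zero_le _
  | some s => exact le_trans (leftLen_le_internals s) (internals_subtreeAt h)

lemma not_initial_of_not_mem {t : BinTree} {p : List Bool} (h : p ∉ t.vertices) :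
    ¬ t.IsInitial p := fun hi => h (mem_vertices.mpr hi.1)

end BinTree

namespace ColoredBinTree

lemma ext' {B₁ B₂ : ColoredBinTree} (ht : B₁.tree = B₂.tree) (hc : B₁.color = B₂.color) :
    B₁ = B₂ := by
  cases B₁; cases B₂
  simp only at ht hc
  subst ht; subst hc; rfl

lemma color_le_internals (B : ColoredBinTree) (p : List Bool) :
    B.color p ≤ B.tree.internals := by
  by_cases h : BinTree.IsInitial B.tree p
  · exact le_trans (B.color_le p h) (le_trans (Nat.div_le_self _ _)
      (BinTree.pathLen_le_internals _ _))
  · rw [B.color_eq_zero p h]; exact Nat.zero_le _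

/-- The "flip" of a color. -/
def flipc (c : ℕ) : ℕ := if c % 2 = 0 then c + 1 else c - 1

lemma flipc_even {c : ℕ} (h : c % 2 = 0) : flipc c = c + 1 := if_pos h
lemma flipc_odd {c : ℕ} (h : c % 2 = 1) : flipc c = c - 1 := by
  simp [flipc, h]

lemma flipc_flipc (c : ℕ) : flipc (flipc c) = c := by
  rcases Nat.mod_two_eq_zero_or_one c with h | h
  · rw [flipc_even h, flipc_odd (by omega)]; omega
  · rw [flipc_odd h, flipc_even (by omega)]; omega

/-- Flip the color of an improper initial vertex `p`. -/
def flipAt (B : ColoredBinTree) (p : List Bool) (h1 : BinTree.IsInitial B.tree p)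
    (h2 : ¬ B.ProperAt p) : ColoredBinTree where
  tree := B.tree
  color q := if q = p then flipc (B.color p) else B.color q
  color_le q hq := by
    show (if q = p then flipc (B.color p) else B.color q) ≤ BinTree.pathLen B.tree q / 2
    by_cases hqp : q = p
    · subst hqp
      rw [if_pos rfl]
      have hle := B.color_le q hq
      rcases Nat.mod_two_eq_zero_or_one (B.color q) with h | h
      · rw [flipc_even h]
        rcases lt_or_eq_of_le hle with hlt | heq
        · omega
        · exact absurd ⟨B.color q / 2, by omega, by omega⟩ h2
      · rw [flipc_odd h]; omega
    · rw [if_neg hqp]; exact B.color_le q hq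
  color_eq_zero q hq := by
    show (if q = p then flipc (B.color p) else B.color q) = 0
    have hqp : q ≠ p := fun e => hq (by rw [e]; exact h1)
    rw [if_neg hqp]; exact B.color_eq_zero q hq

lemma flipAt_tree (B : ColoredBinTree) (p : List Bool) (h1 : BinTree.IsInitial B.tree p)
    (h2 : ¬ B.ProperAt p) : (B.flipAt p h1 h2).tree = B.tree := rfl

lemma flipAt_color_self (B : ColoredBinTree) (p : List Bool) (h1 : BinTree.IsInitial B.tree p)
    (h2 : ¬ B.ProperAt p) : (B.flipAt p h1 h2).color p = flipc (B.color p) := if_pos rfl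

lemma flipAt_color_ne (B : ColoredBinTree) (p : List Bool) (h1 : BinTree.IsInitial B.tree p)
    (h2 : ¬ B.ProperAt p) {q : List Bool} (hqp : q ≠ p) :
    (B.flipAt p h1 h2).color q = B.color q := if_neg hqp

lemma not_properAt_flipAt (B : ColoredBinTree) (p : List Bool) (h1 : BinTree.IsInitial B.tree p)
    (h2 : ¬ B.ProperAt p) : ¬ (B.flipAt p h1 h2).ProperAt p := by
  rintro ⟨k, hk1, hk2⟩
  rw [flipAt_color_self] at hk1
  have hk2' : BinTree.pathLen B.tree p = 4 * k ∨ BinTree.pathLen B.tree p = 4 * k + 1 := hk2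
  have hle := B.color_le p h1
  rcases Nat.mod_two_eq_zero_or_one (B.color p) with h | h
  · rw [flipc_even h] at hk1; omega
  · rw [flipc_odd h] at hk1; omega

lemma properAt_flipAt_iff (B : ColoredBinTree) (p : List Bool) (h1 : BinTree.IsInitial B.tree p)
    (h2 : ¬ B.ProperAt p) {q : List Bool} (hqp : q ≠ p) :
    (B.flipAt p h1 h2).ProperAt q ↔ B.ProperAt q := by
  unfold ProperAt
  rw [show (B.flipAt p h1 h2).tree = B.tree from rfl]
  rw [flipAt_color_ne B p h1 h2 hqp]

/-- The "badness" predicate: `p` is an improper initial vertex. -/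
def badPred (B : ColoredBinTree) (p : List Bool) : Prop :=
  BinTree.IsInitial B.tree p ∧ ¬ B.ProperAt p

lemma not_proper_iff {B : ColoredBinTree} : ¬ B.Proper ↔ ∃ p, badPred B p := by
  unfold Proper badPred
  push_neg
  rfl

lemma badPred_flipAt (B : ColoredBinTree) (p : List Bool) (h1 : BinTree.IsInitial B.tree p)
    (h2 : ¬ B.ProperAt p) (q : List Bool) :
    badPred (B.flipAt p h1 h2) q ↔ badPred B q := by
  unfold badPred
  rw [show (B.flipAt p h1 h2).tree = B.tree from rfl]
  by_cases hqp : q = p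
  · subst hqp
    constructor
    · rintro ⟨hi, -⟩; exact ⟨hi, h2⟩
    · rintro ⟨hi, -⟩; exact ⟨hi, not_properAt_flipAt B q h1 h2⟩
  · rw [properAt_flipAt_iff B p h1 h2 hqp]

/-- The first improper initial vertex, if any. -/
noncomputable def badVert (B : ColoredBinTree) : Option (List Bool) :=
  B.tree.vertices.find? (fun p => @decide (badPred B p) (Classical.propDecidable _))

lemma badVert_eq_of_iff {B B' : ColoredBinTree} (ht : B'.tree = B.tree)
    (h : ∀ p, badPred B' p ↔ badPred B p) : badVert B' = badVert B := by
  unfold badVert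
  rw [ht]
  congr 1
  funext p
  exact decide_eq_decide.mpr (h p)

lemma badVert_spec {B : ColoredBinTree} (h : ¬ B.Proper) :
    ∃ p, badVert B = some p ∧ badPred B p := by
  obtain ⟨p, hp⟩ := not_proper_iff.mp h
  have hmem : p ∈ B.tree.vertices := BinTree.mem_vertices.mpr hp.1.1
  have hs : (B.tree.vertices.find?
      (fun p => @decide (badPred B p) (Classical.propDecidable _))).isSome :=
    List.find?_isSome.mpr ⟨p, hmem, @decide_eq_true _ (Classical.propDecidable _) hp⟩
  obtain ⟨q, hq⟩ := Option.isSome_iff_exists.mp hs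
  refine ⟨q, hq, ?_⟩
  have h2 := List.find?_some hq
  simp only [decide_eq_true_eq] at h2
  exact h2

open Classical in
/-- The parity-reversing map: flip the color of the first improper initial vertex. -/
noncomputable def phi (B : ColoredBinTree) : ColoredBinTree :=
  if h : B.Proper then B
  else flipAt B (badVert_spec h).choose (badVert_spec h).choose_spec.2.1
    (badVert_spec h).choose_spec.2.2

lemma phi_spec {B : ColoredBinTree} (h : ¬ B.Proper) :
    ∃ (p : List Bool) (hp : badPred B p),
      badVert B = some p ∧ phi B = B.flipAt p hp.1 hp.2 := by
  refine ⟨(badVert_spec h).choose, (badVert_spec h).choose_spec.2,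
    (badVert_spec h).choose_spec.1, ?_⟩
  unfold phi
  rw [dif_neg h]

lemma phi_tree (B : ColoredBinTree) : (phi B).tree = B.tree := by
  unfold phi
  split <;> rfl

lemma phi_not_proper {B : ColoredBinTree} (h : ¬ B.Proper) : ¬ (phi B).Proper := by
  obtain ⟨p, hp, -, he⟩ := phi_spec h
  rw [he, not_proper_iff]
  exact ⟨p, (badPred_flipAt B p hp.1 hp.2 p).mpr hp⟩

lemma flip_flip (B : ColoredBinTree) (p : List Bool) (h1 : BinTree.IsInitial B.tree p)
    (h2 : ¬ B.ProperAt p) (h1' : BinTree.IsInitial (B.flipAt p h1 h2).tree p)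
    (h2' : ¬ (B.flipAt p h1 h2).ProperAt p) :
    (B.flipAt p h1 h2).flipAt p h1' h2' = B := by
  apply ext'
  · rfl
  funext q
  show (if q = p then flipc ((B.flipAt p h1 h2).color p) else (B.flipAt p h1 h2).color q)
      = B.color q
  by_cases hqp : q = p
  · subst hqp
    rw [if_pos rfl, flipAt_color_self, flipc_flipc]
  · rw [if_neg hqp, flipAt_color_ne B p h1 h2 hqp]

lemma phi_phi (B : ColoredBinTree) : phi (phi B) = B := by
  by_cases h : B.Proper
  · have e : phi B = B := by
      unfold phi
      rw [dif_pos h]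
    rw [e, e]
  · obtain ⟨p, hp, hsome, he⟩ := phi_spec h
    have h' : ¬ (phi B).Proper := phi_not_proper h
    obtain ⟨p', hp', hsome', he'⟩ := phi_spec h'
    have hbv : badVert (phi B) = badVert B := by
      rw [he]
      exact badVert_eq_of_iff rfl (badPred_flipAt B p hp.1 hp.2)
    have hpp : p' = p := by
      rw [hbv, hsome] at hsome'
      exact (Option.some_injective _ hsome').symm
    subst hpp
    rw [he']
    clear he' hsome' hbv
    revert hp'
    rw [he]
    intro hp'
    exact flip_flip B _ hp.1 hp.2 hp'.1 hp'.2

lemma sum_update {α : Type*} [DecidableEq α] {l : List α} (hl : l.Nodup) {p : α} (hp : p ∈ l)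
    (f : α → ℕ) (a : ℕ) :
    (l.map (fun q => if q = p then a else f q)).sum + f p = (l.map f).sum + a := by
  induction l with
  | nil => cases hp
  | cons x l ih =>
    simp only [List.map_cons, List.sum_cons]
    rcases List.mem_cons.mp hp with rfl | hpl
    · have hx : p ∉ l := (List.nodup_cons.mp hl).1
      rw [if_pos rfl]
      have he : l.map (fun q => if q = p then a else f q) = l.map f :=
        List.map_congr_left (fun q hq => if_neg (fun e => hx (by rw [← e]; exact hq)))
      rw [he]; omega
    · have hxp : x ≠ p := by rintro rfl; exact (List.nodup_cons.mp hl).1 hpl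
      rw [if_neg hxp]
      have := ih (List.nodup_cons.mp hl).2 hpl
      omega

lemma colorNum_flipAt (B : ColoredBinTree) (p : List Bool) (h1 : BinTree.IsInitial B.tree p)
    (h2 : ¬ B.ProperAt p) :
    (B.flipAt p h1 h2).colorNum + B.color p = B.colorNum + flipc (B.color p) := by
  have hmem : p ∈ B.tree.vertices := BinTree.mem_vertices.mpr h1.1
  exact sum_update (BinTree.nodup_vertices _) hmem B.color (flipc (B.color p))

lemma phi_colorNum {B : ColoredBinTree} (h : ¬ B.Proper) :
    (phi B).colorNum = B.colorNum + 1 ∨ B.colorNum = (phi B).colorNum + 1 := by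
  obtain ⟨p, hp, -, he⟩ := phi_spec h
  rw [he]
  have key := colorNum_flipAt B p hp.1 hp.2
  rcases Nat.mod_two_eq_zero_or_one (B.color p) with hpar | hpar
  · rw [flipc_even hpar] at key; left; omega
  · rw [flipc_odd hpar] at key; right; omega

lemma even_list_sum {l : List ℕ} (h : ∀ x ∈ l, Even x) : Even l.sum := by
  induction l with
  | nil => simp
  | cons x l ih =>
    simp only [List.sum_cons]
    exact (h x (.head _)).add (ih fun y hy => h y (.tail _ hy))

lemma even_colorNum_of_proper {B : ColoredBinTree} (h : B.Proper) : Even B.colorNum := by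
  apply even_list_sum
  intro x hx
  obtain ⟨q, -, rfl⟩ := List.mem_map.mp hx
  by_cases hq : BinTree.IsInitial B.tree q
  · obtain ⟨k, hk, -⟩ := h q hq
    exact ⟨k, by omega⟩
  · rw [B.color_eq_zero q hq]; exact Even.zero

end ColoredBinTree

/-! ### Finiteness -/

namespace BinTree

/-- A prefix-free encoding of binary trees. -/
def enc : BinTree → List Bool
  | .leaf => [false]
  | .node l r => true :: (enc l ++ enc r)

lemma enc_length (t : BinTree) : (enc t).length = 2 * t.internals + 1 := by
  induction t with
  | leaf => simp [enc, internals]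
  | node l r ihl ihr => simp [enc, internals, ihl, ihr]; omega

lemma enc_prefix : ∀ t₁ t₂ : BinTree, ∀ s₁ s₂ : List Bool,
    enc t₁ ++ s₁ = enc t₂ ++ s₂ → t₁ = t₂ ∧ s₁ = s₂ := by
  intro t₁
  induction t₁ with
  | leaf =>
    intro t₂ s₁ s₂ h
    cases t₂ with
    | leaf => simp [enc] at h; exact ⟨rfl, h⟩
    | node l r => simp [enc] at h
  | node l r ihl ihr =>
    intro t₂ s₁ s₂ h
    cases t₂ with
    | leaf => simp [enc] at h
    | node l₂ r₂ =>
      simp only [enc, List.cons_append, List.cons.injEq, List.append_assoc] at h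
      obtain ⟨-, h⟩ := h
      obtain ⟨rfl, h2⟩ := ihl l₂ _ _ h
      obtain ⟨rfl, rfl⟩ := ihr r₂ _ _ h2
      exact ⟨rfl, rfl⟩

lemma enc_injective : Function.Injective enc := fun a b h =>
  (enc_prefix a b [] [] (by simp [h])).1

instance finite_internals_eq (n : ℕ) : Finite {t : BinTree // t.internals = n} := by
  have : Finite {l : List Bool // l.length = 2 * n + 1} :=
    Set.finite_coe_iff.mpr (List.finite_length_eq Bool (2 * n + 1))
  apply Finite.of_injective
    (fun t => (⟨enc t.1, by rw [enc_length, t.2]⟩ : {l : List Bool // l.length = 2 * n + 1}))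
  intro a b h
  exact Subtype.ext (enc_injective (congrArg Subtype.val h))

end BinTree

namespace ColoredBinTree

instance finite_internals_eq (n : ℕ) : Finite {B : ColoredBinTree // B.tree.internals = n} := by
  have h1 : Finite {t : BinTree // t.internals = n} := BinTree.finite_internals_eq n
  have h2 : Finite {l : List (Fin (n + 1)) // l.length = 2 * n + 1} :=
    Set.finite_coe_iff.mpr (List.finite_length_eq (Fin (n + 1)) (2 * n + 1))
  apply Finite.of_injective (fun B =>
    ((⟨B.1.tree, B.2⟩ : {t : BinTree // t.internals = n}),
     (⟨B.1.tree.vertices.map (fun p =>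
        (⟨B.1.color p, Nat.lt_succ_of_le (le_trans (color_le_internals B.1 p) (le_of_eq B.2))⟩ : Fin (n + 1))),
      by rw [List.length_map, BinTree.length_vertices, B.2]⟩ :
        {l : List (Fin (n + 1)) // l.length = 2 * n + 1})))
  intro B₁ B₂ h
  rw [Prod.mk.injEq, Subtype.mk.injEq, Subtype.mk.injEq] at h
  obtain ⟨ht, hl⟩ := h
  apply Subtype.ext
  apply ext' ht
  funext p
  by_cases hp : p ∈ B₁.1.tree.vertices
  · have hl' : B₁.1.tree.vertices.map B₁.1.color = B₂.1.tree.vertices.map B₂.1.color := by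
      have h3 := congrArg (List.map Fin.val) hl
      simpa [List.map_map, Function.comp_def] using h3
    rw [← ht] at hl'
    exact List.map_inj_left.mp hl' p hp
  · have h₁ := B₁.1.color_eq_zero p (BinTree.not_initial_of_not_mem hp)
    rw [ht] at hp
    have h₂ := B₂.1.color_eq_zero p (BinTree.not_initial_of_not_mem hp)
    rw [h₁, h₂]

end ColoredBinTree

/-- **A parity-reversing involution on improper colored binary trees** (Theorem 1).
For every nonnegative integer `n` there is an involution `φ` on the set of improper
colored binary trees with `n` internal vertices which changes the color number by exactly
`1` (hence reverses its parity); consequently `|ECB_n| - |OCB_n| = |CB'_n|`, where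
`ECB_n` (resp. `OCB_n`) is the set of colored binary trees with `n` internal vertices
with even (resp. odd) color number, and `CB'_n` is the set of proper colored binary trees
with `n` internal vertices. -/
theorem parity_reversing_involution (n : ℕ) :
    (∃ φ : {B : ColoredBinTree // B.tree.internals = n ∧ ¬ B.Proper} →
        {B : ColoredBinTree // B.tree.internals = n ∧ ¬ B.Proper},
      Function.Involutive φ ∧
        ∀ B, (φ B).1.colorNum = B.1.colorNum + 1 ∨ B.1.colorNum = (φ B).1.colorNum + 1) ∧
    (Nat.card {B : ColoredBinTree // B.tree.internals = n ∧ Even B.colorNum} : ℤ) -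
        (Nat.card {B : ColoredBinTree // B.tree.internals = n ∧ Odd B.colorNum} : ℤ) =
      Nat.card {B : ColoredBinTree // B.tree.internals = n ∧ B.Proper} := by
  classical
  have hparE : ∀ B : ColoredBinTree, ¬ B.Proper → Even B.colorNum →
      Odd (ColoredBinTree.phi B).colorNum := by
    intro B h hE
    rw [Nat.even_iff] at hE
    rw [Nat.odd_iff]
    rcases ColoredBinTree.phi_colorNum h with h1 | h1 <;> omega
  have hparO : ∀ B : ColoredBinTree, ¬ B.Proper → Odd B.colorNum →
      Even (ColoredBinTree.phi B).colorNum := by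
    intro B h hO
    rw [Nat.odd_iff] at hO
    rw [Nat.even_iff]
    rcases ColoredBinTree.phi_colorNum h with h1 | h1 <;> omega
  constructor
  · refine ⟨fun x => ⟨ColoredBinTree.phi x.1,
      by rw [ColoredBinTree.phi_tree]; exact x.2.1, ColoredBinTree.phi_not_proper x.2.2⟩,
      fun x => Subtype.ext (ColoredBinTree.phi_phi x.1),
      fun x => ColoredBinTree.phi_colorNum x.2.2⟩
  · have hfin : ∀ q : ColoredBinTree → Prop,
        {B : ColoredBinTree | B.tree.internals = n ∧ q B}.Finite := by
      intro q
      have h1 : Finite {B : ColoredBinTree // B.tree.internals = n} :=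
        ColoredBinTree.finite_internals_eq n
      have hs : {B : ColoredBinTree | B.tree.internals = n}.Finite := Set.finite_coe_iff.mp h1
      exact hs.subset fun B hB => hB.1
    have key : Nat.card {B : ColoredBinTree // B.tree.internals = n ∧ ¬ B.Proper ∧ Even B.colorNum}
        = Nat.card {B : ColoredBinTree // B.tree.internals = n ∧ ¬ B.Proper ∧ Odd B.colorNum} :=
      Nat.card_congr
        { toFun := fun x => ⟨ColoredBinTree.phi x.1,
            by rw [ColoredBinTree.phi_tree]; exact x.2.1,
            ColoredBinTree.phi_not_proper x.2.2.1, hparE x.1 x.2.2.1 x.2.2.2⟩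
          invFun := fun x => ⟨ColoredBinTree.phi x.1,
            by rw [ColoredBinTree.phi_tree]; exact x.2.1,
            ColoredBinTree.phi_not_proper x.2.2.1, hparO x.1 x.2.2.1 x.2.2.2⟩
          left_inv := fun x => Subtype.ext (ColoredBinTree.phi_phi x.1)
          right_inv := fun x => Subtype.ext (ColoredBinTree.phi_phi x.1) }
    have hEP : {B : ColoredBinTree | B.tree.internals = n ∧ Even B.colorNum}
        = {B : ColoredBinTree | B.tree.internals = n ∧ B.Proper}
          ∪ {B : ColoredBinTree | B.tree.internals = n ∧ ¬ B.Proper ∧ Even B.colorNum} := by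
      ext B
      simp only [Set.mem_setOf_eq, Set.mem_union]
      constructor
      · rintro ⟨hi, he⟩
        by_cases hP : B.Proper
        · exact Or.inl ⟨hi, hP⟩
        · exact Or.inr ⟨hi, hP, he⟩
      · rintro (⟨hi, hP⟩ | ⟨hi, -, he⟩)
        · exact ⟨hi, ColoredBinTree.even_colorNum_of_proper hP⟩
        · exact ⟨hi, he⟩
    have hO : {B : ColoredBinTree | B.tree.internals = n ∧ Odd B.colorNum}
        = {B : ColoredBinTree | B.tree.internals = n ∧ ¬ B.Proper ∧ Odd B.colorNum} := by
      ext B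
      simp only [Set.mem_setOf_eq]
      constructor
      · rintro ⟨hi, ho⟩
        refine ⟨hi, fun hP => ?_, ho⟩
        exact (Nat.not_odd_iff_even.mpr (ColoredBinTree.even_colorNum_of_proper hP)) ho
      · rintro ⟨hi, -, ho⟩
        exact ⟨hi, ho⟩
    have hdisj : Disjoint {B : ColoredBinTree | B.tree.internals = n ∧ B.Proper}
        {B : ColoredBinTree | B.tree.internals = n ∧ ¬ B.Proper ∧ Even B.colorNum} := by
      rw [Set.disjoint_left]
      rintro B ⟨-, hP⟩ ⟨-, hnP, -⟩
      exact hnP hP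
    have cE : Nat.card {B : ColoredBinTree // B.tree.internals = n ∧ Even B.colorNum}
        = ({B : ColoredBinTree | B.tree.internals = n ∧ Even B.colorNum}).ncard :=
      Nat.card_coe_set_eq _
    have cO : Nat.card {B : ColoredBinTree // B.tree.internals = n ∧ Odd B.colorNum}
        = ({B : ColoredBinTree | B.tree.internals = n ∧ Odd B.colorNum}).ncard :=
      Nat.card_coe_set_eq _
    have cP : Nat.card {B : ColoredBinTree // B.tree.internals = n ∧ B.Proper}
        = ({B : ColoredBinTree | B.tree.internals = n ∧ B.Proper}).ncard :=
      Nat.card_coe_set_eq _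
    have hIEO : ({B : ColoredBinTree | B.tree.internals = n ∧ ¬ B.Proper ∧ Even B.colorNum}).ncard
        = ({B : ColoredBinTree | B.tree.internals = n ∧ ¬ B.Proper ∧ Odd B.colorNum}).ncard := by
      rw [← Nat.card_coe_set_eq, ← Nat.card_coe_set_eq]
      exact key
    rw [cE, cO, cP, hEP, hO, Set.ncard_union_eq hdisj (hfin _) (hfin _), hIEO]
    push_cast
    ring
end

section
/- For every nonnegative integer n, there is a bijection between T_n, the set of colored 5-ary trees of total weight n, and CB'_n, the set of proper colored binary trees with n internal vertices; in particular |T_n| = |CB'_n|. -/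
/-- A complete 5-ary tree: every internal vertex has exactly 5 (ordered) children. -/
inductive FiveTree : Type
  | leaf : FiveTree
  | node : FiveTree → FiveTree → FiveTree → FiveTree → FiveTree → FiveTree

namespace FiveTree

/-- The number of internal vertices of a complete 5-ary tree. -/
def internals : FiveTree → ℕ
  | leaf => 0
  | node a b c d e =>
      internals a + internals b + internals c + internals d + internals e + 1

/-- The subtree rooted at the vertex reached from the root by the given path of child
indices; `none` if there is no such vertex. -/
def subtreeAt : FiveTree → List (Fin 5) → Option FiveTree
  | t, [] => some t
  | leaf, _ :: _ => none
  | node a _ _ _ _, ⟨0, _⟩ :: p => subtreeAt a p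
  | node _ b _ _ _, ⟨1, _⟩ :: p => subtreeAt b p
  | node _ _ c _ _, ⟨2, _⟩ :: p => subtreeAt c p
  | node _ _ _ d _, ⟨3, _⟩ :: p => subtreeAt d p
  | node _ _ _ _ e, ⟨_ + 4, _⟩ :: p => subtreeAt e p

/-- The list of (the paths from the root to) all vertices of a complete 5-ary tree. -/
def vertices : FiveTree → List (List (Fin 5))
  | leaf => [[]]
  | node a b c d e =>
      [] :: ((vertices a).map (List.cons 0) ++ (vertices b).map (List.cons 1) ++
        (vertices c).map (List.cons 2) ++ (vertices d).map (List.cons 3) ++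
        (vertices e).map (List.cons 4))

end FiveTree

/-- A colored 5-ary tree: a complete 5-ary tree in which every vertex (internal or leaf)
is assigned a nonnegative integer color (non-vertex paths carry the junk color `0`). -/
structure ColoredFiveTree : Type where
  /-- the underlying complete 5-ary tree -/
  tree : FiveTree
  /-- the color of each vertex (indexed by the path from the root) -/
  color : List (Fin 5) → ℕ
  color_eq_zero : ∀ p, ¬ (FiveTree.subtreeAt tree p).isSome → color p = 0

namespace ColoredFiveTree

/-- The sum of the colors of all vertices of a colored 5-ary tree. -/
def colorSum (T : ColoredFiveTree) : ℕ :=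
  ((T.tree.vertices).map T.color).sum

/-- A colored 5-ary tree with `p` internal vertices has weight `n` iff its colors sum to
`n - 4p`; equivalently, its weight is `(sum of colors) + 4 · (number of internal vertices)`. -/
def weight (T : ColoredFiveTree) : ℕ :=
  T.colorSum + 4 * T.tree.internals

end ColoredFiveTree

/-! ### Auxiliary development: 5-ary side -/

namespace Aux5

open FiveTree

theorem cft_ext {T T' : ColoredFiveTree} (h1 : T.tree = T'.tree)
    (h2 : T.color = T'.color) : T = T' := by
  cases T; cases T'; simp_all

/-- which child: pick among five subtrees -/
def pick (a b c d e : FiveTree) : Fin 5 → FiveTree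
  | ⟨0, _⟩ => a
  | ⟨1, _⟩ => b
  | ⟨2, _⟩ => c
  | ⟨3, _⟩ => d
  | ⟨_ + 4, _⟩ => e

theorem subtreeAt_node (a b c d e : FiveTree) (i : Fin 5) (q : List (Fin 5)) :
    subtreeAt (node a b c d e) (i :: q) = subtreeAt (pick a b c d e i) q := by
  match i with
  | ⟨0, _⟩ => rfl
  | ⟨1, _⟩ => rfl
  | ⟨2, _⟩ => rfl
  | ⟨3, _⟩ => rfl
  | ⟨n + 4, _⟩ => rfl

/-- a colored leaf with root color `c` -/
def cfLeaf (c : ℕ) : ColoredFiveTree where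
  tree := .leaf
  color p := if p = [] then c else 0
  color_eq_zero := by
    intro p hp
    cases p with
    | nil => simp [subtreeAt] at hp
    | cons i q => simp

/-- a colored node with root color `0` and the given five colored subtrees -/
def cfNode (f : Fin 5 → ColoredFiveTree) : ColoredFiveTree where
  tree := .node (f 0).tree (f 1).tree (f 2).tree (f 3).tree (f 4).tree
  color p := match p with
    | [] => 0
    | i :: q => (f i).color q
  color_eq_zero := by
    intro p hp
    cases p with
    | nil => simp [subtreeAt] at hp
    | cons i q =>
        rw [subtreeAt_node] at hp
        have hpick : pick (f 0).tree (f 1).tree (f 2).tree (f 3).tree (f 4).tree i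
            = (f i).tree := by
          match i with
          | ⟨0, _⟩ => rfl
          | ⟨1, _⟩ => rfl
          | ⟨2, _⟩ => rfl
          | ⟨3, _⟩ => rfl
          | ⟨4, _⟩ => rfl
        rw [hpick] at hp
        exact (f i).color_eq_zero q hp

/-- increase the root color by one -/
def cfBump (T : ColoredFiveTree) : ColoredFiveTree where
  tree := T.tree
  color p := if p = [] then T.color [] + 1 else T.color p
  color_eq_zero := by
    intro p hp
    cases p with
    | nil => simp [subtreeAt] at hp
    | cons i q => simpa using T.color_eq_zero _ hp

theorem weight_cfLeaf (c : ℕ) : (cfLeaf c).weight = c := by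
  simp [ColoredFiveTree.weight, ColoredFiveTree.colorSum, cfLeaf, vertices,
    FiveTree.internals]

theorem vertices_eq (t : FiveTree) :
    ∃ l, vertices t = [] :: l ∧ ∀ p ∈ l, p ≠ [] := by
  cases t with
  | leaf => exact ⟨[], rfl, by simp⟩
  | node a b c d e =>
      refine ⟨_, rfl, ?_⟩
      intro p hp
      simp only [List.mem_append, List.mem_map] at hp
      rintro rfl
      simp at hp

theorem weight_cfBump (T : ColoredFiveTree) : (cfBump T).weight = T.weight + 1 := by
  obtain ⟨l, hl, hne⟩ := vertices_eq T.tree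
  have htree : (cfBump T).tree = T.tree := rfl
  simp only [ColoredFiveTree.weight, ColoredFiveTree.colorSum, htree, hl, List.map_cons,
    List.sum_cons]
  have : l.map (cfBump T).color = l.map T.color :=
    List.map_congr_left fun p hp => by simp [cfBump, hne p hp]
  rw [this]
  simp [cfBump]
  omega

@[simp] theorem cfNode_tree (f : Fin 5 → ColoredFiveTree) :
    (cfNode f).tree = .node (f 0).tree (f 1).tree (f 2).tree (f 3).tree (f 4).tree := rfl

@[simp] theorem cfNode_color_nil (f : Fin 5 → ColoredFiveTree) :
    (cfNode f).color [] = 0 := rfl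

@[simp] theorem cfNode_color_cons (f : Fin 5 → ColoredFiveTree) (i : Fin 5)
    (q : List (Fin 5)) : (cfNode f).color (i :: q) = (f i).color q := rfl

theorem weight_cfNode (f : Fin 5 → ColoredFiveTree) :
    (cfNode f).weight = (f 0).weight + (f 1).weight + (f 2).weight + (f 3).weight +
      (f 4).weight + 4 := by
  have hmap : ∀ i : Fin 5,
      ((vertices (f i).tree).map (List.cons i)).map (cfNode f).color
        = (vertices (f i).tree).map (f i).color := by
    intro i
    rw [List.map_map]
    rfl
  simp only [ColoredFiveTree.weight, ColoredFiveTree.colorSum, cfNode_tree, vertices,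
    FiveTree.internals, List.map_cons, List.sum_cons, List.map_append, List.sum_append,
    hmap, cfNode_color_nil]
  omega

@[simp] theorem cfLeaf_color_nil (c : ℕ) : (cfLeaf c).color [] = c := rfl
@[simp] theorem cfLeaf_tree (c : ℕ) : (cfLeaf c).tree = .leaf := rfl
@[simp] theorem cfBump_tree (T : ColoredFiveTree) : (cfBump T).tree = T.tree := rfl
@[simp] theorem cfBump_color_nil (T : ColoredFiveTree) :
    (cfBump T).color [] = T.color [] + 1 := rfl
theorem cfBump_color_cons (T : ColoredFiveTree) (i : Fin 5) (q : List (Fin 5)) :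
    (cfBump T).color (i :: q) = T.color (i :: q) := by simp [cfBump]

/-- the structural constructor map for colored 5-ary trees -/
def I5 : Unit ⊕ ColoredFiveTree ⊕ (Fin 5 → ColoredFiveTree) → ColoredFiveTree
  | .inl _ => cfLeaf 0
  | .inr (.inl T) => cfBump T
  | .inr (.inr f) => cfNode f

theorem pick_eq (a b c d e : FiveTree) :
    pick a b c d e 0 = a ∧ pick a b c d e 1 = b ∧ pick a b c d e 2 = c ∧
      pick a b c d e 3 = d ∧ pick a b c d e 4 = e :=
  ⟨rfl, rfl, rfl, rfl, rfl⟩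

theorem I5_bij : Function.Bijective I5 := by
  constructor
  · rintro (⟨⟩ | T | f) (⟨⟩ | T' | f') h <;> simp only [I5] at h
    · rfl
    · exact absurd (congrFun (congrArg ColoredFiveTree.color h) []) (by simp)
    · exact absurd (congrArg ColoredFiveTree.tree h) (by simp)
    · exact absurd (congrFun (congrArg ColoredFiveTree.color h) []) (by simp)
    · have ht := congrArg ColoredFiveTree.tree h
      have hc := congrArg ColoredFiveTree.color h
      refine congrArg (Sum.inr ∘ Sum.inl) (cft_ext (by simpa using ht) ?_)
      funext p
      cases p with
      | nil => simpa using congrFun hc []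
      | cons i q =>
          have := congrFun hc (i :: q)
          rwa [cfBump_color_cons, cfBump_color_cons] at this
    · exact absurd (congrFun (congrArg ColoredFiveTree.color h) []) (by simp)
    · exact absurd (congrArg ColoredFiveTree.tree h) (by simp)
    · exact absurd (congrFun (congrArg ColoredFiveTree.color h) []) (by simp)
    · have ht := congrArg ColoredFiveTree.tree h
      have hc := congrArg ColoredFiveTree.color h
      simp only [cfNode_tree, FiveTree.node.injEq] at ht
      refine congrArg (Sum.inr ∘ Sum.inr) (funext fun i => cft_ext ?_ ?_)
      · fin_cases i <;> tauto
      · funext q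
        simpa using congrFun hc (i :: q)
  · intro T
    rcases hc : T.color [] with _ | c
    · rcases ht : T.tree with _ | ⟨a, b, c, d, e⟩
      · refine ⟨.inl (), (cft_ext (by rw [ht]; rfl) ?_).symm⟩
        funext p
        cases p with
        | nil => simpa [I5, cfLeaf] using hc
        | cons i q =>
            simp only [I5, cfLeaf, List.cons_ne_nil, if_false, ite_self]
            exact T.color_eq_zero _ (by rw [ht]; simp [FiveTree.subtreeAt])
      · refine ⟨.inr (.inr fun i => ⟨pick a b c d e i, fun q => T.color (i :: q),
          fun q hq => T.color_eq_zero (i :: q) (by rw [ht, subtreeAt_node]; exact hq)⟩),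
          (cft_ext ht ?_).symm⟩
        funext p
        cases p with
        | nil => exact hc
        | cons i q => rfl
    · refine ⟨.inr (.inl ⟨T.tree, fun p => if p = [] then c else T.color p,
        fun p hp => ?_⟩), cft_ext rfl ?_⟩
      · cases p with
        | nil => simp [FiveTree.subtreeAt] at hp
        | cons i q => simpa using T.color_eq_zero _ hp
      · funext p
        cases p with
        | nil => simpa [I5, cfBump] using hc.symm
        | cons i q => simp [I5, cfBump]

theorem I5_wt (x : Unit ⊕ ColoredFiveTree ⊕ (Fin 5 → ColoredFiveTree)) :
    (I5 x).weight = match x with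
      | .inl _ => 0
      | .inr (.inl T) => T.weight + 1
      | .inr (.inr f) => (f 0).weight + (f 1).weight + (f 2).weight + (f 3).weight +
          (f 4).weight + 4 := by
  rcases x with ⟨⟩ | T | f
  · simpa [I5] using weight_cfLeaf 0
  · simpa [I5] using weight_cfBump T
  · simpa [I5] using weight_cfNode f

end Aux5

/-! ### Auxiliary development: binary side -/

namespace AuxB

open BinTree ColoredBinTree

theorem cbt_ext {B B' : ColoredBinTree} (h1 : B.tree = B'.tree)
    (h2 : B.color = B'.color) : B = B' := by
  cases B; cases B'; simp_all

theorem subtreeAt_nil (t : BinTree) : subtreeAt t [] = some t := by cases t <;> rfl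

theorem isInitial_nil (t : BinTree) : IsInitial t [] :=
  ⟨by rw [subtreeAt_nil]; rfl, Or.inl rfl⟩

theorem isInitial_leaf {p : List Bool} (h : IsInitial .leaf p) : p = [] := by
  cases p with
  | nil => rfl
  | cons b q => simpa [IsInitial, subtreeAt] using h.1

theorem isInitial_node_true {l r : BinTree} {p : List Bool} :
    IsInitial (node l r) (true :: p) ↔ IsInitial r p := by
  unfold IsInitial
  rw [show subtreeAt (node l r) (true :: p) = subtreeAt r p from rfl]
  cases p with
  | nil => simp
  | cons b q => rw [List.getLast?_cons_cons]; simp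

theorem isInitial_node_false {l r : BinTree} {p : List Bool} :
    IsInitial (node l r) (false :: p) ↔ p ≠ [] ∧ IsInitial l p := by
  unfold IsInitial
  rw [show subtreeAt (node l r) (false :: p) = subtreeAt l p from rfl]
  cases p with
  | nil => simp
  | cons b q => rw [List.getLast?_cons_cons]; simp

theorem pathLen_nil (t : BinTree) : pathLen t [] = leftLen t := by
  unfold pathLen
  rw [subtreeAt_nil]

theorem pathLen_node_true (l r : BinTree) (p : List Bool) :
    pathLen (node l r) (true :: p) = pathLen r p := rfl

theorem pathLen_node_false (l r : BinTree) (p : List Bool) :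
    pathLen (node l r) (false :: p) = pathLen l p := rfl

/-- leaf with color 0 everywhere -/
def cbLeaf : ColoredBinTree :=
  ⟨.leaf, fun _ => 0, fun _ _ => Nat.zero_le _, fun _ _ => rfl⟩

/-- prepend a new root, whose right subtree is `R`, on top of `B`; the root keeps
the root color of `B`. -/
def attach (R B : ColoredBinTree) : ColoredBinTree where
  tree := .node B.tree R.tree
  color q :=
    match q with
    | [] => B.color []
    | true :: p => R.color p
    | false :: p => if p = [] then 0 else B.color p
  color_le := by
    rintro (_ | ⟨b, p⟩) h
    · show B.color [] ≤ pathLen (node B.tree R.tree) [] / 2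
      have hb := B.color_le [] (isInitial_nil _)
      rw [pathLen_nil] at hb
      rw [pathLen_nil]
      show _ ≤ (leftLen B.tree + 1) / 2
      omega
    · cases b
      · obtain ⟨hp, hi⟩ := isInitial_node_false.1 h
        show (if p = [] then 0 else B.color p) ≤ _
        rw [if_neg hp]
        exact B.color_le p hi
      · exact R.color_le p (isInitial_node_true.1 h)
  color_eq_zero := by
    rintro (_ | ⟨b, p⟩) h
    · exact absurd (isInitial_nil _) h
    · cases b
      · show (if p = [] then 0 else B.color p) = 0
        rcases eq_or_ne p [] with rfl | hp
        · rfl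
        · rw [if_neg hp]
          exact B.color_eq_zero p fun hi => h (isInitial_node_false.2 ⟨hp, hi⟩)
      · exact R.color_eq_zero p fun hi => h (isInitial_node_true.2 hi)

@[simp] theorem attach_tree (R B : ColoredBinTree) :
    (attach R B).tree = .node B.tree R.tree := rfl
@[simp] theorem attach_color_nil (R B : ColoredBinTree) :
    (attach R B).color [] = B.color [] := rfl
@[simp] theorem attach_color_true (R B : ColoredBinTree) (p : List Bool) :
    (attach R B).color (true :: p) = R.color p := rfl
theorem attach_color_false (R B : ColoredBinTree) {p : List Bool} (hp : p ≠ []) :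
    (attach R B).color (false :: p) = B.color p := by
  show (if p = [] then 0 else B.color p) = _
  rw [if_neg hp]

/-- change the root color -/
def setRoot (B : ColoredBinTree) (c : ℕ) (h : c ≤ leftLen B.tree / 2) :
    ColoredBinTree where
  tree := B.tree
  color p := if p = [] then c else B.color p
  color_le := by
    rintro (_ | ⟨b, p⟩) hi
    · simpa [pathLen_nil] using h
    · simpa using B.color_le _ hi
  color_eq_zero := by
    rintro (_ | ⟨b, p⟩) hi
    · exact absurd (isInitial_nil _) hi
    · simpa using B.color_eq_zero _ hi

@[simp] theorem setRoot_tree (B : ColoredBinTree) (c : ℕ) (h) :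
    (setRoot B c h).tree = B.tree := rfl
@[simp] theorem setRoot_color_nil (B : ColoredBinTree) (c : ℕ) (h) :
    (setRoot B c h).color [] = c := rfl
theorem setRoot_color_ne (B : ColoredBinTree) (c : ℕ) (h) {p : List Bool}
    (hp : p ≠ []) : (setRoot B c h).color p = B.color p := by
  show (if p = [] then c else B.color p) = _
  rw [if_neg hp]

theorem setRoot_self (B : ColoredBinTree) (h) : setRoot B (B.color []) h = B := by
  refine cbt_ext rfl (funext fun p => ?_)
  rcases eq_or_ne p [] with rfl | hp
  · rfl
  · exact setRoot_color_ne _ _ _ hp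

theorem setRoot_setRoot (B : ColoredBinTree) (c c' : ℕ) (h h' h'') :
    setRoot (setRoot B c h) c' h' = setRoot B c' h'' := by
  refine cbt_ext rfl (funext fun p => ?_)
  rcases eq_or_ne p [] with rfl | hp
  · rfl
  · rw [setRoot_color_ne _ _ _ hp, setRoot_color_ne _ _ _ hp, setRoot_color_ne _ _ _ hp]

theorem attach_setRoot (X Y : ColoredBinTree) (c : ℕ) (h h') :
    attach X (setRoot Y c h) = setRoot (attach X Y) c h' := by
  refine cbt_ext rfl (funext fun q => ?_)
  rcases q with _ | ⟨b, p⟩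
  · rfl
  · cases b
    · rcases eq_or_ne p [] with rfl | hp
      · rfl
      · rw [attach_color_false _ _ hp, setRoot_color_ne _ _ _ hp,
          setRoot_color_ne _ _ _ (List.cons_ne_nil _ _), attach_color_false _ _ hp]
    · rw [attach_color_true, setRoot_color_ne _ _ _ (List.cons_ne_nil _ _),
        attach_color_true]

/-- proper at all non-root initial vertices -/
def NRP (B : ColoredBinTree) : Prop :=
  ∀ p, p ≠ [] → IsInitial B.tree p → B.ProperAt p

theorem proper_nrp {B : ColoredBinTree} (h : B.Proper) : NRP B :=
  fun p _ hi => h p hi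

theorem proper_iff (B : ColoredBinTree) : B.Proper ↔ NRP B ∧ B.ProperAt [] := by
  constructor
  · exact fun h => ⟨proper_nrp h, h [] (isInitial_nil _)⟩
  · rintro ⟨h1, h2⟩ p hp
    rcases eq_or_ne p [] with rfl | hne
    · exact h2
    · exact h1 p hne hp

theorem properAt_attach_true (R B : ColoredBinTree) (p : List Bool) :
    (attach R B).ProperAt (true :: p) ↔ R.ProperAt p := Iff.rfl

theorem properAt_attach_false (R B : ColoredBinTree) {p : List Bool} (hp : p ≠ []) :
    (attach R B).ProperAt (false :: p) ↔ B.ProperAt p := by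
  unfold ColoredBinTree.ProperAt
  rw [attach_color_false _ _ hp]
  rfl

theorem properAt_setRoot (B : ColoredBinTree) (c : ℕ) (h) {p : List Bool}
    (hp : p ≠ []) : (setRoot B c h).ProperAt p ↔ B.ProperAt p := by
  unfold ColoredBinTree.ProperAt
  rw [setRoot_color_ne _ _ _ hp]
  rfl

theorem nrp_attach {R B : ColoredBinTree} : NRP (attach R B) ↔ R.Proper ∧ NRP B := by
  constructor
  · intro h
    constructor
    · intro p hp
      exact (properAt_attach_true R B p).1 <|
        h (true :: p) (by simp) (isInitial_node_true.2 hp)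
    · intro p hp hi
      exact (properAt_attach_false R B hp).1 <|
        h (false :: p) (by simp) (isInitial_node_false.2 ⟨hp, hi⟩)
  · rintro ⟨h1, h2⟩ q hq hi
    rcases q with _ | ⟨b, p⟩
    · exact absurd rfl hq
    · cases b
      · obtain ⟨hp, hi'⟩ := isInitial_node_false.1 hi
        exact (properAt_attach_false R B hp).2 (h2 p hp hi')
      · exact (properAt_attach_true R B p).2 (h1 p (isInitial_node_true.1 hi))

theorem nrp_setRoot {B : ColoredBinTree} {c : ℕ} {h} :
    NRP (setRoot B c h) ↔ NRP B := by
  constructor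
  · intro hn p hp hi
    exact (properAt_setRoot B c h hp).1 (hn p hp hi)
  · intro hn p hp hi
    exact (properAt_setRoot B c h hp).2 (hn p hp hi)

theorem nrp_cbLeaf : NRP cbLeaf := by
  intro p hp hi
  exact absurd (isInitial_leaf hi) hp

theorem cbLeaf_proper : cbLeaf.Proper := by
  intro p hp
  rcases isInitial_leaf hp with rfl
  exact ⟨0, rfl, Or.inl rfl⟩

/-- the tower of four attaches used for the `x⁴B⁵` case -/
def core (f : Fin 5 → {B : ColoredBinTree // B.Proper}) : ColoredBinTree :=
  attach (f 0).1 (attach (f 1).1 (attach (f 2).1 (attach (f 3).1 (f 4).1)))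

theorem leftLen_core (f : Fin 5 → {B : ColoredBinTree // B.Proper}) :
    leftLen (core f).tree = leftLen (f 4).1.tree + 4 := rfl

theorem core_le (f : Fin 5 → {B : ColoredBinTree // B.Proper}) :
    (f 4).1.color [] + 2 ≤ leftLen (core f).tree / 2 := by
  have h4 := (f 4).1.color_le [] (isInitial_nil _)
  rw [pathLen_nil] at h4
  rw [leftLen_core]
  omega

/-- the structural constructor map for proper colored binary trees -/
def IB : Unit ⊕ {B : ColoredBinTree // B.Proper} ⊕
    (Fin 5 → {B : ColoredBinTree // B.Proper}) → {B : ColoredBinTree // B.Proper}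
  | .inl _ => ⟨cbLeaf, cbLeaf_proper⟩
  | .inr (.inl R) =>
      ⟨attach R.1 cbLeaf, by
        rw [proper_iff]
        refine ⟨nrp_attach.2 ⟨R.2, nrp_cbLeaf⟩, 0, rfl, Or.inr rfl⟩⟩
  | .inr (.inr f) =>
      ⟨setRoot (core f) ((f 4).1.color [] + 2) (core_le f), by
        rw [proper_iff]
        constructor
        · exact nrp_setRoot.2 <| nrp_attach.2 ⟨(f 0).2, nrp_attach.2 ⟨(f 1).2,
            nrp_attach.2 ⟨(f 2).2, nrp_attach.2 ⟨(f 3).2, proper_nrp (f 4).2⟩⟩⟩⟩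
        · obtain ⟨k, hc, hl⟩ := (f 4).2 [] (isInitial_nil _)
          rw [pathLen_nil] at hl
          refine ⟨k + 1, by simp [hc]; ring, ?_⟩
          rw [pathLen_nil, setRoot_tree, leftLen_core]
          rcases hl with hl | hl
          · exact Or.inl (by omega)
          · exact Or.inr (by omega)⟩

theorem internals_attach (R B : ColoredBinTree) :
    (attach R B).tree.internals = B.tree.internals + R.tree.internals + 1 := rfl

theorem IB_wt_leaf : (IB (.inl ())).1.tree.internals = 0 := rfl

theorem IB_wt_one (R : {B : ColoredBinTree // B.Proper}) :
    (IB (.inr (.inl R))).1.tree.internals = R.1.tree.internals + 1 := by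
  show (attach R.1 cbLeaf).tree.internals = _
  rw [internals_attach]
  show BinTree.internals .leaf + _ + 1 = _
  show 0 + _ + 1 = _
  omega

theorem IB_wt_five (f : Fin 5 → {B : ColoredBinTree // B.Proper}) :
    (IB (.inr (.inr f))).1.tree.internals = (f 0).1.tree.internals +
      (f 1).1.tree.internals + (f 2).1.tree.internals + (f 3).1.tree.internals +
      (f 4).1.tree.internals + 4 := by
  show ((((f 4).1.tree.internals + (f 3).1.tree.internals + 1) +
      (f 2).1.tree.internals + 1) + (f 1).1.tree.internals + 1) +
      (f 0).1.tree.internals + 1 = _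
  omega

theorem IBf_tree (f : Fin 5 → {B : ColoredBinTree // B.Proper}) :
    (IB (.inr (.inr f))).1.tree =
      .node (.node (.node (.node (f 4).1.tree (f 3).1.tree) (f 2).1.tree)
        (f 1).1.tree) (f 0).1.tree := rfl

theorem IBf_color_nil (f : Fin 5 → {B : ColoredBinTree // B.Proper}) :
    (IB (.inr (.inr f))).1.color [] = (f 4).1.color [] + 2 := rfl

theorem IBf_color0 (f : Fin 5 → {B : ColoredBinTree // B.Proper}) (p : List Bool) :
    (IB (.inr (.inr f))).1.color (true :: p) = (f 0).1.color p := by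
  show (setRoot (core f) ((f 4).1.color [] + 2) (core_le f)).color _ = _
  rw [setRoot_color_ne _ _ _ (List.cons_ne_nil _ _)]
  rfl

theorem IBf_color1 (f : Fin 5 → {B : ColoredBinTree // B.Proper}) (p : List Bool) :
    (IB (.inr (.inr f))).1.color (false :: true :: p) = (f 1).1.color p := by
  show (setRoot (core f) ((f 4).1.color [] + 2) (core_le f)).color _ = _
  rw [setRoot_color_ne _ _ _ (List.cons_ne_nil _ _)]
  show (core f).color _ = _
  rw [show core f = attach (f 0).1 (attach (f 1).1 (attach (f 2).1
    (attach (f 3).1 (f 4).1))) from rfl,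
    attach_color_false _ _ (List.cons_ne_nil _ _), attach_color_true]

theorem IBf_color2 (f : Fin 5 → {B : ColoredBinTree // B.Proper}) (p : List Bool) :
    (IB (.inr (.inr f))).1.color (false :: false :: true :: p) = (f 2).1.color p := by
  show (setRoot (core f) ((f 4).1.color [] + 2) (core_le f)).color _ = _
  rw [setRoot_color_ne _ _ _ (List.cons_ne_nil _ _)]
  show (core f).color _ = _
  rw [show core f = attach (f 0).1 (attach (f 1).1 (attach (f 2).1
    (attach (f 3).1 (f 4).1))) from rfl,
    attach_color_false _ _ (List.cons_ne_nil _ _),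
    attach_color_false _ _ (List.cons_ne_nil _ _), attach_color_true]

theorem IBf_color3 (f : Fin 5 → {B : ColoredBinTree // B.Proper}) (p : List Bool) :
    (IB (.inr (.inr f))).1.color (false :: false :: false :: true :: p)
      = (f 3).1.color p := by
  show (setRoot (core f) ((f 4).1.color [] + 2) (core_le f)).color _ = _
  rw [setRoot_color_ne _ _ _ (List.cons_ne_nil _ _)]
  show (core f).color _ = _
  rw [show core f = attach (f 0).1 (attach (f 1).1 (attach (f 2).1
    (attach (f 3).1 (f 4).1))) from rfl,
    attach_color_false _ _ (List.cons_ne_nil _ _),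
    attach_color_false _ _ (List.cons_ne_nil _ _),
    attach_color_false _ _ (List.cons_ne_nil _ _), attach_color_true]

theorem IBf_color4 (f : Fin 5 → {B : ColoredBinTree // B.Proper}) {p : List Bool}
    (hp : p ≠ []) :
    (IB (.inr (.inr f))).1.color (false :: false :: false :: false :: p)
      = (f 4).1.color p := by
  show (setRoot (core f) ((f 4).1.color [] + 2) (core_le f)).color _ = _
  rw [setRoot_color_ne _ _ _ (List.cons_ne_nil _ _)]
  show (core f).color _ = _
  rw [show core f = attach (f 0).1 (attach (f 1).1 (attach (f 2).1
    (attach (f 3).1 (f 4).1))) from rfl,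
    attach_color_false _ _ (List.cons_ne_nil _ _),
    attach_color_false _ _ (List.cons_ne_nil _ _),
    attach_color_false _ _ (List.cons_ne_nil _ _),
    attach_color_false _ _ hp]

theorem eq_parts {x y : {B : ColoredBinTree // B.Proper}} (h : x = y) :
    x.1.tree = y.1.tree ∧ x.1.color = y.1.color := by
  subst h; exact ⟨rfl, rfl⟩

theorem IB_inj : Function.Injective IB := by
  rintro (⟨⟩ | R | f) (⟨⟩ | R' | f') h <;> obtain ⟨ht, hc⟩ := eq_parts h
  · rfl
  · exact absurd (show BinTree.leaf = .node cbLeaf.tree R'.1.tree from ht) (by simp)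
  · rw [show ((IB (.inl ())).1.tree = .leaf) from rfl, IBf_tree] at ht
    exact absurd ht (by simp)
  · exact absurd (show BinTree.node cbLeaf.tree R.1.tree = .leaf from ht) (by simp)
  · have ht' : BinTree.node cbLeaf.tree R.1.tree = .node cbLeaf.tree R'.1.tree := ht
    injection ht' with h1 h2
    refine congrArg (Sum.inr ∘ Sum.inl) (Subtype.ext (cbt_ext h2 ?_))
    funext p
    exact congrFun hc (true :: p)
  · rw [show ((IB (.inr (.inl R))).1.tree = .node .leaf R.1.tree) from rfl,
      IBf_tree] at ht
    injection ht with h1 h2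
    exact absurd h1 (by simp)
  · rw [show ((IB (.inl ())).1.tree = .leaf) from rfl, IBf_tree] at ht
    exact absurd ht.symm (by simp)
  · rw [show ((IB (.inr (.inl R'))).1.tree = .node .leaf R'.1.tree) from rfl,
      IBf_tree] at ht
    injection ht with h1 h2
    exact absurd h1.symm (by simp)
  · rw [IBf_tree, IBf_tree] at ht
    injection ht with ht h0
    injection ht with ht h1
    injection ht with ht h2
    injection ht with h4 h3
    refine congrArg (Sum.inr ∘ Sum.inr) (funext fun i => Subtype.ext ?_)
    have e0 : (f 0).1 = (f' 0).1 := cbt_ext h0 (funext fun p => by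
      have := congrFun hc (true :: p)
      rwa [IBf_color0, IBf_color0] at this)
    have e1 : (f 1).1 = (f' 1).1 := cbt_ext h1 (funext fun p => by
      have := congrFun hc (false :: true :: p)
      rwa [IBf_color1, IBf_color1] at this)
    have e2 : (f 2).1 = (f' 2).1 := cbt_ext h2 (funext fun p => by
      have := congrFun hc (false :: false :: true :: p)
      rwa [IBf_color2, IBf_color2] at this)
    have e3 : (f 3).1 = (f' 3).1 := cbt_ext h3 (funext fun p => by
      have := congrFun hc (false :: false :: false :: true :: p)
      rwa [IBf_color3, IBf_color3] at this)
    have e4 : (f 4).1 = (f' 4).1 := cbt_ext h4 (funext fun p => by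
      rcases eq_or_ne p [] with rfl | hp
      · have := congrFun hc ([] : List Bool)
        rw [IBf_color_nil, IBf_color_nil] at this
        omega
      · have := congrFun hc (false :: false :: false :: false :: p)
        rwa [IBf_color4 _ hp, IBf_color4 _ hp] at this)
    fin_cases i <;> assumption

theorem setRoot_congr2 {B B' : ColoredBinTree} {c c' : ℕ} {h h'} (e : B = B')
    (ec : c = c') : setRoot B c h = setRoot B' c' h' := by
  subst e; subst ec; rfl

theorem attach_le {Y : ColoredBinTree} {c : ℕ} (X : ColoredBinTree)
    (h : c ≤ leftLen Y.tree / 2) : c ≤ leftLen (attach X Y).tree / 2 := by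
  show c ≤ (leftLen Y.tree + 1) / 2
  omega

theorem attach_setRoot' (X Y : ColoredBinTree) (c : ℕ) (h) :
    attach X (setRoot Y c h) = setRoot (attach X Y) c (attach_le X h) :=
  attach_setRoot X Y c h _

theorem leftLen_eq_zero {t : BinTree} (h : leftLen t = 0) : t = .leaf := by
  cases t with
  | leaf => rfl
  | node l r => exact absurd h (by show leftLen l + 1 ≠ 0; omega)

/-- five-way chooser -/
def pk {γ : Type*} (a b c d e : γ) : Fin 5 → γ
  | ⟨0, _⟩ => a
  | ⟨1, _⟩ => b
  | ⟨2, _⟩ => c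
  | ⟨3, _⟩ => d
  | ⟨_ + 4, _⟩ => e

theorem cb_split (B : ColoredBinTree) {tl tr : BinTree} (ht : B.tree = .node tl tr) :
    ∃ (R L : ColoredBinTree) (h : B.color [] ≤ leftLen (attach R L).tree / 2),
      L.color [] = 0 ∧ L.tree = tl ∧ B = setRoot (attach R L) (B.color []) h := by
  refine ⟨⟨tr, fun p => B.color (true :: p), ?_, ?_⟩,
    ⟨tl, fun p => if p = [] then 0 else B.color (false :: p), ?_, ?_⟩, ?_, rfl, rfl, ?_⟩
  · intro p hp
    have h1 := B.color_le (true :: p) (by rw [ht]; exact isInitial_node_true.2 hp)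
    rw [ht] at h1
    rwa [pathLen_node_true] at h1
  · intro p hp
    refine B.color_eq_zero (true :: p) fun hi => ?_
    rw [ht] at hi
    exact hp (isInitial_node_true.1 hi)
  · rintro (_ | ⟨b, p⟩) hp
    · exact Nat.zero_le _
    · show (if (b :: p : List Bool) = [] then 0 else B.color (false :: b :: p)) ≤ _
      rw [if_neg (List.cons_ne_nil _ _)]
      have h1 := B.color_le (false :: b :: p)
        (by rw [ht]; exact isInitial_node_false.2 ⟨List.cons_ne_nil _ _, hp⟩)
      rw [ht] at h1
      rwa [pathLen_node_false] at h1
  · rintro (_ | ⟨b, p⟩) hp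
    · rfl
    · show (if (b :: p : List Bool) = [] then 0 else B.color (false :: b :: p)) = 0
      rw [if_neg (List.cons_ne_nil _ _)]
      refine B.color_eq_zero (false :: b :: p) fun hi => ?_
      rw [ht] at hi
      exact hp (isInitial_node_false.1 hi).2
  · have h1 := B.color_le [] (isInitial_nil _)
    rw [pathLen_nil, ht] at h1
    exact id h1
  · refine cbt_ext ht (funext fun q => ?_)
    rcases q with _ | ⟨b, p⟩
    · rfl
    · cases b
      · rw [setRoot_color_ne _ _ _ (List.cons_ne_nil _ _)]
        rcases eq_or_ne p [] with rfl | hp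
        · show B.color [false] = _
          refine B.color_eq_zero [false] fun hi => ?_
          rw [ht] at hi
          exact (isInitial_node_false.1 hi).1 rfl
        · rw [attach_color_false _ _ hp]
          show B.color (false :: p) = if p = [] then 0 else B.color (false :: p)
          rw [if_neg hp]
      · rw [setRoot_color_ne _ _ _ (List.cons_ne_nil _ _), attach_color_true]

theorem IB_surj : Function.Surjective IB := by
  rintro ⟨B, hB⟩
  rcases htc : B.tree with _ | ⟨tl, tr⟩
  · refine ⟨.inl (), Subtype.ext ?_⟩
    show cbLeaf = B
    refine cbt_ext htc.symm (funext fun p => ?_)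
    show 0 = B.color p
    rcases eq_or_ne p [] with rfl | hp
    · have h1 := B.color_le [] (isInitial_nil _)
      rw [pathLen_nil, htc, show BinTree.leftLen .leaf = 0 from rfl] at h1
      omega
    · refine (B.color_eq_zero p fun hi => ?_).symm
      rw [htc] at hi
      exact hp (isInitial_leaf hi)
  · obtain ⟨R, L, h, hL0, hLt, hBeq⟩ := cb_split B htc
    obtain ⟨k, hck, hlk⟩ := hB [] (isInitial_nil _)
    rw [pathLen_nil, htc,
      show BinTree.leftLen (.node tl tr) = BinTree.leftLen tl + 1 from rfl] at hlk
    have hBP : (setRoot (attach R L) (B.color []) h).Proper := by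
      rw [← hBeq]; exact hB
    obtain ⟨hnrp1, _⟩ := (proper_iff _).1 hBP
    obtain ⟨pR, hnrpL⟩ := nrp_attach.1 (nrp_setRoot.1 hnrp1)
    cases k with
    | zero =>
      have hll : BinTree.leftLen tl = 0 := by omega
      have hLleaf : L = cbLeaf := by
        refine cbt_ext (hLt.trans (leftLen_eq_zero hll)) (funext fun p => ?_)
        rcases eq_or_ne p [] with rfl | hp
        · exact hL0
        · refine L.color_eq_zero p fun hi => ?_
          rw [hLt.trans (leftLen_eq_zero hll)] at hi
          exact hp (isInitial_leaf hi)
      refine ⟨.inr (.inl ⟨R, pR⟩), Subtype.ext ?_⟩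
      show attach R cbLeaf = B
      have hc0 : B.color [] = (attach R L).color [] := by
        rw [attach_color_nil, hL0, hck]
      calc attach R cbLeaf = attach R L := by rw [hLleaf]
        _ = setRoot (attach R L) ((attach R L).color [])
            (by rw [← pathLen_nil]; exact (attach R L).color_le [] (isInitial_nil _)) :=
          (setRoot_self _ _).symm
        _ = setRoot (attach R L) (B.color []) h := setRoot_congr2 rfl hc0.symm
        _ = B := hBeq.symm
    | succ k =>
      have h3 : 2 < BinTree.leftLen tl := by omega
      -- first split of L
      rcases htl : tl with _ | ⟨a1, b1⟩
      · rw [htl, show BinTree.leftLen .leaf = 0 from rfl] at h3; omega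
      obtain ⟨R1, L1, h1, hL10, hL1t, hLeq⟩ := cb_split L (hLt.trans htl)
      have hLsimp : L = attach R1 L1 := by
        calc L = setRoot (attach R1 L1) (L.color []) h1 := hLeq
          _ = setRoot (attach R1 L1) ((attach R1 L1).color [])
              (by rw [← pathLen_nil]; exact (attach R1 L1).color_le [] (isInitial_nil _)) :=
            setRoot_congr2 rfl (by rw [attach_color_nil, hL10, hL0])
          _ = attach R1 L1 := setRoot_self _ _
      have hlen1 : BinTree.leftLen tl = BinTree.leftLen L1.tree + 1 := by
        rw [← hLt, hLsimp]; rfl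
      rw [hLsimp] at hnrpL
      obtain ⟨pR1, hnrpL1⟩ := nrp_attach.1 hnrpL
      -- second split
      rcases htl1 : L1.tree with _ | ⟨a2, b2⟩
      · rw [htl1, show BinTree.leftLen .leaf = 0 from rfl] at hlen1; omega
      obtain ⟨R2, L2, h2, hL20, hL2t, hL1eq⟩ := cb_split L1 htl1
      have hL1simp : L1 = attach R2 L2 := by
        calc L1 = setRoot (attach R2 L2) (L1.color []) h2 := hL1eq
          _ = setRoot (attach R2 L2) ((attach R2 L2).color [])
              (by rw [← pathLen_nil]; exact (attach R2 L2).color_le [] (isInitial_nil _)) :=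
            setRoot_congr2 rfl (by rw [attach_color_nil, hL20, hL10])
          _ = attach R2 L2 := setRoot_self _ _
      have hlen2 : BinTree.leftLen L1.tree = BinTree.leftLen L2.tree + 1 := by
        rw [hL1simp]; rfl
      rw [hL1simp] at hnrpL1
      obtain ⟨pR2, hnrpL2⟩ := nrp_attach.1 hnrpL1
      -- third split
      rcases htl2 : L2.tree with _ | ⟨a3, b3⟩
      · rw [htl2, show BinTree.leftLen .leaf = 0 from rfl] at hlen2; omega
      obtain ⟨R3, L3, hh3, hL30, hL3t, hL2eq⟩ := cb_split L2 htl2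
      have hL2simp : L2 = attach R3 L3 := by
        calc L2 = setRoot (attach R3 L3) (L2.color []) hh3 := hL2eq
          _ = setRoot (attach R3 L3) ((attach R3 L3).color [])
              (by rw [← pathLen_nil]; exact (attach R3 L3).color_le [] (isInitial_nil _)) :=
            setRoot_congr2 rfl (by rw [attach_color_nil, hL30, hL20])
          _ = attach R3 L3 := setRoot_self _ _
      have hlen3 : BinTree.leftLen L2.tree = BinTree.leftLen L3.tree + 1 := by
        rw [hL2simp]; rfl
      rw [hL2simp] at hnrpL2
      obtain ⟨pR3, hnrpL3⟩ := nrp_attach.1 hnrpL2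
      -- the length of the remaining chain
      have hm : BinTree.leftLen L3.tree = 4 * k ∨ BinTree.leftLen L3.tree = 4 * k + 1 := by
        omega
      have hle3 : 2 * k ≤ BinTree.leftLen L3.tree / 2 := by omega
      have pF4 : (setRoot L3 (2 * k) hle3).Proper := by
        rw [proper_iff]
        refine ⟨nrp_setRoot.2 hnrpL3, k, setRoot_color_nil _ _ _, ?_⟩
        rw [pathLen_nil, setRoot_tree]
        exact hm
      refine ⟨.inr (.inr (pk ⟨R, pR⟩ ⟨R1, pR1⟩ ⟨R2, pR2⟩ ⟨R3, pR3⟩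
        ⟨setRoot L3 (2 * k) hle3, pF4⟩)), Subtype.ext ?_⟩
      have pf := core_le (pk (⟨R, pR⟩ : {B : ColoredBinTree // B.Proper}) ⟨R1, pR1⟩
        ⟨R2, pR2⟩ ⟨R3, pR3⟩ ⟨setRoot L3 (2 * k) hle3, pF4⟩)
      show setRoot (attach R (attach R1 (attach R2 (attach R3
        (setRoot L3 (2 * k) hle3))))) (2 * k + 2) pf = B
      have pf2 : 2 * k + 2 ≤
          leftLen (attach R (attach R1 (attach R2 (attach R3 L3)))).tree / 2 := by
        show 2 * k + 2 ≤ (BinTree.leftLen L3.tree + 4) / 2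
        omega
      calc setRoot (attach R (attach R1 (attach R2 (attach R3
            (setRoot L3 (2 * k) hle3))))) (2 * k + 2) pf
          = setRoot (setRoot (attach R (attach R1 (attach R2 (attach R3 L3)))) (2 * k)
              (attach_le R (attach_le R1 (attach_le R2 (attach_le R3 hle3)))))
              (2 * k + 2) pf2 :=
            setRoot_congr2
              (by rw [attach_setRoot', attach_setRoot', attach_setRoot', attach_setRoot'])
              rfl
        _ = setRoot (attach R (attach R1 (attach R2 (attach R3 L3)))) (2 * k + 2) pf2 :=
            setRoot_setRoot _ _ _ _ _ pf2
        _ = setRoot (attach R L) (B.color []) h :=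
            setRoot_congr2 (by rw [hLsimp, hL1simp, hL2simp]) (by omega)
        _ = B := hBeq.symm

end AuxB

/-! ### Generic machinery: types with a `1 + x·A + x⁴·A⁵` structural decomposition -/

namespace AuxG

variable {α : Type}

/-- the weight of a decomposition -/
def wtSum (wt : α → ℕ) : (Unit ⊕ α ⊕ (Fin 5 → α)) → ℕ
  | .inl _ => 0
  | .inr (.inl a) => wt a + 1
  | .inr (.inr f) => wt (f 0) + wt (f 1) + wt (f 2) + wt (f 3) + wt (f 4) + 4

variable (wt : α → ℕ) (I : (Unit ⊕ α ⊕ (Fin 5 → α)) → α)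
  (hI : Function.Bijective I) (hwt : ∀ x, wt (I x) = wtSum wt x)

include hwt in
theorem wt_eq (a : α) : wt a = wtSum wt ((Equiv.ofBijective I hI).symm a) := by
  conv_lhs => rw [← (Equiv.ofBijective I hI).apply_symm_apply a]
  exact hwt _

/-- splitting a subtype of a three-fold sum -/
def sumSubtype3 (p : Unit ⊕ α ⊕ (Fin 5 → α) → Prop) :
    {x // p x} ≃ {u : Unit // p (.inl u)} ⊕ {b : α // p (.inr (.inl b))} ⊕
      {f : Fin 5 → α // p (.inr (.inr f))} where
  toFun x := match x with
    | ⟨.inl u, h⟩ => .inl ⟨u, h⟩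
    | ⟨.inr (.inl b), h⟩ => .inr (.inl ⟨b, h⟩)
    | ⟨.inr (.inr f), h⟩ => .inr (.inr ⟨f, h⟩)
  invFun x := match x with
    | .inl ⟨u, h⟩ => ⟨.inl u, h⟩
    | .inr (.inl ⟨b, h⟩) => ⟨.inr (.inl b), h⟩
    | .inr (.inr ⟨f, h⟩) => ⟨.inr (.inr f), h⟩
  left_inv := by rintro ⟨(u | b | f), h⟩ <;> rfl
  right_inv := by rintro ((⟨u, h⟩ | ⟨b, h⟩) | ⟨f, h⟩) <;> rfl

/-- weight-0 elements are unique -/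
def zeroEquiv : {a : α // wt a = 0} ≃ Unit where
  toFun _ := ()
  invFun _ := ⟨I (.inl ()), by rw [hwt]; simp only [wtSum]⟩
  left_inv := by
    rintro ⟨a, ha⟩
    obtain ⟨x, rfl⟩ := hI.2 a
    refine Subtype.ext (congrArg I ?_)
    rcases x with ⟨⟩ | b | f
    · rfl
    · rw [hwt] at ha
      simp only [wtSum] at ha
      exact absurd ha (by omega)
    · rw [hwt] at ha
      simp only [wtSum] at ha
      exact absurd ha (by omega)
  right_inv _ := rfl

/-- the structural decomposition of the elements of weight `n + 1` -/
noncomputable def stepEquiv (n : ℕ) : {a : α // wt a = n + 1} ≃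
    ({a : α // wt a = n} ⊕ {f : Fin 5 → α //
      wt (f 0) + wt (f 1) + wt (f 2) + wt (f 3) + wt (f 4) + 4 = n + 1}) := by
  haveI : IsEmpty {u : Unit // wtSum wt (Sum.inl u) = n + 1} :=
    ⟨fun ⟨u, h⟩ => by simp only [wtSum] at h; omega⟩
  exact ((Equiv.ofBijective I hI).symm.subtypeEquiv
      (q := fun x => wtSum wt x = n + 1) fun a => by
      rw [wt_eq wt I hI hwt a]).trans <|
    (sumSubtype3 _).trans <|
    (Equiv.emptySum _ _).trans <|
    Equiv.sumCongr
      (Equiv.subtypeEquivRight fun b => by simp only [wtSum]; omega)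
      (Equiv.subtypeEquivRight fun f => by simp only [wtSum])

/-- fibering a 5-tuple over its vector of weights -/
def fiberEquiv (n : ℕ) : {f : Fin 5 → α //
      wt (f 0) + wt (f 1) + wt (f 2) + wt (f 3) + wt (f 4) + 4 = n} ≃
    Σ w : {w : Fin 5 → ℕ // w 0 + w 1 + w 2 + w 3 + w 4 + 4 = n},
      ∀ i, {a : α // wt a = w.1 i} where
  toFun x := ⟨⟨fun i => wt (x.1 i), x.2⟩, fun i => ⟨x.1 i, rfl⟩⟩
  invFun y := ⟨fun i => (y.2 i).1, by
    show wt (y.2 0).1 + wt (y.2 1).1 + wt (y.2 2).1 + wt (y.2 3).1 +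
      wt (y.2 4).1 + 4 = n
    rw [(y.2 0).2, (y.2 1).2, (y.2 2).2, (y.2 3).2, (y.2 4).2]
    exact y.1.2⟩
  left_inv x := Subtype.ext rfl
  right_inv := by
    rintro ⟨⟨w, hw⟩, g⟩
    refine Sigma.ext (Subtype.ext (funext fun i => (g i).2)) ?_
    show HEq (fun i => (⟨(g i).1, rfl⟩ : {a : α // wt a = wt ((g i).1)})) g
    refine Function.hfunext rfl fun i i' hii => ?_
    obtain rfl : i = i' := eq_of_heq hii
    refine (Subtype.heq_iff_coe_eq fun x => ?_).2 rfl
    rw [(g i).2]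

end AuxG

/-! ### Putting everything together -/

section Main

/-- weight function on the binary side -/
def wtB (P : {B : ColoredBinTree // B.Proper}) : ℕ := P.1.tree.internals

theorem hwt5 (x : Unit ⊕ ColoredFiveTree ⊕ (Fin 5 → ColoredFiveTree)) :
    (Aux5.I5 x).weight = AuxG.wtSum ColoredFiveTree.weight x := by
  rcases x with ⟨⟩ | T | f <;> exact Aux5.I5_wt _

theorem hwtB (x : Unit ⊕ {B : ColoredBinTree // B.Proper} ⊕
    (Fin 5 → {B : ColoredBinTree // B.Proper})) :
    wtB (AuxB.IB x) = AuxG.wtSum wtB x := by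
  rcases x with ⟨⟩ | R | f
  · exact AuxB.IB_wt_leaf
  · exact AuxB.IB_wt_one _
  · exact AuxB.IB_wt_five _

theorem IB_bij : Function.Bijective AuxB.IB := ⟨AuxB.IB_inj, AuxB.IB_surj⟩

theorem main_equiv (n : ℕ) : Nonempty ({T : ColoredFiveTree // T.weight = n} ≃
    {P : {B : ColoredBinTree // B.Proper} // wtB P = n}) := by
  induction n using Nat.strong_induction_on with
  | _ n ih =>
    cases n with
    | zero =>
        exact ⟨(AuxG.zeroEquiv ColoredFiveTree.weight Aux5.I5 Aux5.I5_bij hwt5).trans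
          (AuxG.zeroEquiv wtB AuxB.IB IB_bij hwtB).symm⟩
    | succ n =>
        have e : ∀ m, m < n + 1 → ({T : ColoredFiveTree // T.weight = m} ≃
            {P : {B : ColoredBinTree // B.Proper} // wtB P = m}) :=
          fun m hm => (ih m hm).some
        refine ⟨(AuxG.stepEquiv ColoredFiveTree.weight Aux5.I5 Aux5.I5_bij hwt5 n).trans
          (Equiv.trans ?_
            (AuxG.stepEquiv wtB AuxB.IB IB_bij hwtB n).symm)⟩
        refine Equiv.sumCongr (e n (by omega)) ?_
        refine ((AuxG.fiberEquiv ColoredFiveTree.weight (n + 1)).trans ?_).trans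
          (AuxG.fiberEquiv wtB (n + 1)).symm
        refine Equiv.sigmaCongrRight fun w => Equiv.piCongrRight fun i => ?_
        refine e (w.1 i) ?_
        have hw := w.2
        fin_cases i
        · show w.1 0 < n + 1; omega
        · show w.1 1 < n + 1; omega
        · show w.1 2 < n + 1; omega
        · show w.1 3 < n + 1; omega
        · show w.1 4 < n + 1; omega

/-- repackaging of the binary side -/
def shuffleEquiv (n : ℕ) : {P : {B : ColoredBinTree // B.Proper} // wtB P = n} ≃
    {B : ColoredBinTree // B.tree.internals = n ∧ B.Proper} where
  toFun P := ⟨P.1.1, P.2, P.1.2⟩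
  invFun B := ⟨⟨B.1, B.2.2⟩, B.2.1⟩
  left_inv _ := rfl
  right_inv _ := rfl

end Main

/-- **The bijection between colored 5-ary trees and proper colored binary trees**
(Theorem 2). For every nonnegative integer `n` there is a bijection between `T_n`, the
set of colored 5-ary trees of total weight `n`, and `CB'_n`, the set of proper colored
binary trees with `n` internal vertices; in particular `|T_n| = |CB'_n|`. -/
theorem colored_five_ary_equiv_proper_binary (n : ℕ) :
    Nonempty ({T : ColoredFiveTree // T.weight = n} ≃
        {B : ColoredBinTree // B.tree.internals = n ∧ B.Proper}) ∧
      Nat.card {T : ColoredFiveTree // T.weight = n} =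
        Nat.card {B : ColoredBinTree // B.tree.internals = n ∧ B.Proper} := by
  obtain ⟨E⟩ := main_equiv n
  exact ⟨⟨E.trans (shuffleEquiv n)⟩, Nat.card_congr (E.trans (shuffleEquiv n))⟩
end

section
/- For all nonnegative integers n and p with 0 ≤ p ≤ \lfloor n/2 \rfloor, the number f_{n,p} of colored binary trees with n internal vertices and color number p equals (1/(n+1)) \binom{n+p}{p} \binom{2n-2p}{n-2p}. -/
namespace CBT


/-- Łukasiewicz condition: every nonempty proper prefix has sum at least its length. -/
def Luk (w : List ℕ) : Prop := ∀ j, 1 ≤ j → j < w.length → j ≤ (w.take j).sum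

theorem exists_unique_rotate_luk {n : ℕ} {d : List ℕ} (hl : d.length = n + 1)
    (hs : d.sum = n) : ∃! k, k < n + 1 ∧ Luk (d.rotate k) := by
  classical
  set S : ℕ → ℕ := fun m => ((d ++ d).take m).sum with hSdef
  set g : ℕ → ℤ := fun m => (S m : ℤ) - m with hgdef
  have hrot : ∀ k, k ≤ n + 1 → d.rotate k = ((d ++ d).drop k).take (n + 1) := by
    intro k hk
    have h1 : (d ++ d).drop k = d.drop k ++ d :=
      List.drop_append_of_le_length (by omega : k ≤ d.length)
    have h2 : (d.drop k ++ d).take (n + 1)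
        = (d.drop k).take (n + 1) ++ d.take ((n + 1) - (d.drop k).length) :=
      List.take_append ..
    have h3 : (d.drop k).take (n + 1) = d.drop k :=
      List.take_of_length_le (by rw [List.length_drop, hl]; omega)
    have h4 : (n + 1) - (d.drop k).length = k := by rw [List.length_drop, hl]; omega
    rw [List.rotate_eq_drop_append_take (by omega : k ≤ d.length), h1, h2, h3, h4]
  have hS1 : ∀ k j, k ≤ n + 1 → j ≤ n + 1 →
      ((d.rotate k).take j).sum + S k = S (k + j) := by
    intro k j hk hj
    have h1 : (d.rotate k).take j = ((d ++ d).drop k).take j := by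
      rw [hrot k hk, List.take_take, min_eq_left hj]
    have h2 : (d ++ d).take (k + j) = (d ++ d).take k ++ ((d ++ d).drop k).take j :=
      List.take_add ..
    simp only [hSdef, h2, List.sum_append, h1]
    omega
  have hS2 : ∀ m, m ≤ n + 1 → S (m + (n + 1)) = n + S m := by
    intro m hm
    have e1 : (d ++ d).take ((n + 1) + m) = (d ++ d).take (n + 1) ++ ((d ++ d).drop (n + 1)).take m :=
      List.take_add ..
    have e2 : (d ++ d).take (n + 1) = d := List.take_left' hl
    have e3 : (d ++ d).drop (n + 1) = d := List.drop_left' hl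
    have e4 : ((d ++ d).take m).sum = (d.take m).sum := by
      rw [List.take_append_of_le_length (by omega : m ≤ d.length)]
    simp only [hSdef, add_comm m (n + 1), e1, e2, e3, List.sum_append, hs, e4]
  have hg2 : ∀ m, m ≤ n + 1 → g (m + (n + 1)) = g m - 1 := by
    intro m hm
    simp only [hgdef, hS2 m hm]
    push_cast
    ring
  have hLuk : ∀ k, k ≤ n → (Luk (d.rotate k) ↔ ∀ j, 1 ≤ j → j ≤ n → g k ≤ g (k + j)) := by
    intro k hk
    have hlen : (d.rotate k).length = n + 1 := by rw [List.length_rotate, hl]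
    have key : ∀ j, 1 ≤ j → j ≤ n →
        (j ≤ ((d.rotate k).take j).sum ↔ g k ≤ g (k + j)) := by
      intro j hj1 hjn
      have e := hS1 k j (by omega) (by omega)
      simp only [hgdef]
      omega
    constructor
    · intro H j hj1 hjn
      exact (key j hj1 hjn).mp (H j hj1 (by omega))
    · intro H j hj1 hjn
      exact (key j hj1 (by omega)).mpr (H j hj1 (by omega))
  obtain ⟨k₀, hk₀mem, hk₀min⟩ := Finset.exists_min_image (Finset.range (n + 1)) g ⟨0, by simp⟩
  have hQ : ∃ k, k ≤ n ∧ ∀ i, i ≤ n → g k ≤ g i := by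
    refine ⟨k₀, ?_, fun i hi => hk₀min i (Finset.mem_range.mpr (by omega))⟩
    have := Finset.mem_range.mp hk₀mem
    omega
  set k := Nat.find hQ with hkdef
  obtain ⟨hkn, hkmin⟩ := Nat.find_spec hQ
  rw [← hkdef] at hkn hkmin
  have hkleast : ∀ m, m < k → m ≤ n → ∃ i, i ≤ n ∧ g i < g m := by
    intro m hm hmn
    have := Nat.find_min hQ hm
    push_neg at this
    obtain ⟨i, hi, hgi⟩ := this hmn
    exact ⟨i, hi, hgi⟩
  have hvalid : Luk (d.rotate k) := by
    rw [hLuk k hkn]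
    intro j hj1 hjn
    by_cases hcase : k + j ≤ n
    · exact hkmin _ hcase
    · obtain ⟨i, hi, hgi⟩ := hkleast (k + j - (n + 1)) (by omega) (by omega)
      have h5 := hg2 (k + j - (n + 1)) (by omega)
      have heq : (k + j - (n + 1)) + (n + 1) = k + j := by omega
      rw [heq] at h5
      have := hkmin i hi
      omega
  have key : ∀ a b, a < n + 1 → b < n + 1 → a < b → Luk (d.rotate a) → Luk (d.rotate b) →
      False := by
    intro a b ha hb hab hA hB
    have h1 : g a ≤ g b := by
      have := (hLuk a (by omega)).mp hA (b - a) (by omega) (by omega)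
      have heq : a + (b - a) = b := by omega
      rwa [heq] at this
    have h2 : g b ≤ g (a + (n + 1)) := by
      have := (hLuk b (by omega)).mp hB (a + (n + 1) - b) (by omega) (by omega)
      have heq : b + (a + (n + 1) - b) = a + (n + 1) := by omega
      rwa [heq] at this
    have h3 := hg2 a (by omega)
    omega
  refine ⟨k, ⟨by omega, hvalid⟩, ?_⟩
  rintro k' ⟨hk', hk'luk⟩
  by_contra hne
  rcases Nat.lt_or_ge k' k with h | h
  · exact key k' k hk' (by omega) h hk'luk hvalid
  · exact key k k' (by omega) hk' (by omega) hvalid hk'luk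

end CBT

namespace CBT


lemma sum_map_range (m : ℕ) (f : ℕ → ℕ) :
    ((List.range m).map f).sum = ∑ i ∈ Finset.range m, f i := by
  induction m with
  | zero => simp
  | succ m ih => rw [List.range_succ, Finset.sum_range_succ, List.map_append, List.sum_append, ih]; simp

lemma length_antidiagonalTuple : ∀ k n : ℕ,
    (List.Nat.antidiagonalTuple (k + 1) n).length = (n + k).choose k := by
  intro k
  induction k with
  | zero => intro n; simp
  | succ k ih =>
    intro n
    rw [List.Nat.antidiagonalTuple, List.length_flatMap, List.Nat.antidiagonal, List.map_map,
      sum_map_range]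
    simp only [Function.comp_apply, List.length_map, ih]
    have h2 : ∑ i ∈ Finset.range (n + 1), ((n - i) + k).choose k
        = ∑ i ∈ Finset.range (n + 1), (i + k).choose k := by
      rw [← Finset.sum_range_reflect]
      apply Finset.sum_congr rfl
      intro i hi
      simp only [Finset.mem_range] at hi
      congr 2
      omega
    rw [h2]
    have h3 : ∑ i ∈ Finset.range (n + 1), (i + k).choose k
        = ∑ m ∈ Finset.Icc k (n + k), m.choose k := by
      rw [← Finset.Ico_add_one_right_eq_Icc, Finset.sum_Ico_eq_sum_range]
      have h4 : n + k + 1 - k = n + 1 := by omega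
      rw [h4]
      apply Finset.sum_congr rfl
      intro i _
      congr 1
      omega
    rw [h3, Nat.sum_Icc_choose, show n + k + 1 = n + (k + 1) by omega]

lemma card_antidiagonalTuple (k n : ℕ) :
    (Finset.Nat.antidiagonalTuple (k + 1) n).card = (n + k).choose k := by
  have : (Finset.Nat.antidiagonalTuple (k + 1) n).card
      = (List.Nat.antidiagonalTuple (k + 1) n).length := rfl
  rw [this, length_antidiagonalTuple]

lemma card_fin_tuples (k n : ℕ) :
    Nat.card {f : Fin (k + 1) → ℕ // ∑ i, f i = n} = (n + k).choose k := by
  have e : {f : Fin (k + 1) → ℕ // ∑ i, f i = n}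
      ≃ {f // f ∈ Finset.Nat.antidiagonalTuple (k + 1) n} :=
    Equiv.subtypeEquivRight (fun f => (Finset.Nat.mem_antidiagonalTuple).symm)
  rw [Nat.card_congr e, Nat.card_eq_finsetCard, card_antidiagonalTuple]

/-- Stars and bars for lists. -/
lemma sum_get (l : List ℕ) (k' : ℕ) (hl : l.length = k') :
    (∑ i : Fin k', l.get ⟨i, by omega⟩) = l.sum := by
  subst hl
  conv_rhs => rw [← List.ofFn_get l, List.sum_ofFn]

lemma card_lists (k m : ℕ) :
    Nat.card {l : List ℕ // l.length = k + 1 ∧ l.sum = m} = (m + k).choose k := by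
  rw [← card_fin_tuples k m]
  apply Nat.card_congr
  refine
    { toFun := fun l => ⟨fun i => l.1.get ⟨i, by rw [l.2.1]; exact i.2⟩, ?_⟩
      invFun := fun f => ⟨List.ofFn f.1, by simp, by rw [List.sum_ofFn]; exact f.2⟩
      left_inv := ?_
      right_inv := ?_ }
  · rcases l with ⟨l, hl, hs⟩
    dsimp only
    exact (sum_get l (k+1) hl).trans hs
  · rintro ⟨l, hl, hs⟩
    apply Subtype.ext
    dsimp only
    apply List.ext_getElem (by simp [hl])
    intro i h1 h2
    simp only [List.getElem_ofFn, List.get_eq_getElem]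
  · rintro ⟨f, hf⟩
    apply Subtype.ext
    funext i
    simp only [List.get_eq_getElem, List.getElem_ofFn, Fin.eta]

end CBT


namespace CBT
open BinTree

/-- The list of initial vertices of `t` (paths together with subtrees), in preorder of the
associated plane tree. -/
def initsP : BinTree → List (List Bool × BinTree)
  | .leaf => [([], .leaf)]
  | .node l r => ([], .node l r) ::
      ((initsP r).map (fun q => (true :: q.1, q.2)) ++
        (initsP l).tail.map (fun q => (false :: q.1, q.2)))

/-- The Łukasiewicz word of a binary tree. -/
def codeL (t : BinTree) : List ℕ := (initsP t).map (fun q => leftLen q.2)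

lemma initsP_eq_cons (t : BinTree) : initsP t = ([], t) :: (initsP t).tail := by
  cases t <;> rfl

lemma length_initsP (t : BinTree) : (initsP t).length = internals t + 1 := by
  induction t with
  | leaf => rfl
  | node l r ihl ihr =>
    simp only [initsP, List.length_cons, List.length_append, List.length_map,
      List.length_tail, ihl, ihr, internals]
    omega

lemma length_codeL (t : BinTree) : (codeL t).length = internals t + 1 := by
  rw [codeL, List.length_map, length_initsP]

lemma codeL_eq_cons (t : BinTree) : codeL t = leftLen t :: (codeL t).tail := by
  conv_lhs => rw [codeL, initsP_eq_cons t]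
  conv_rhs => rw [codeL, initsP_eq_cons t]
  simp

lemma codeL_node (l r : BinTree) :
    codeL (.node l r) = (leftLen l + 1) :: (codeL r ++ (codeL l).tail) := by
  simp only [codeL, initsP, List.map_cons, List.map_append, List.map_map,
    Function.comp, List.map_tail]
  rfl

lemma sum_codeL (t : BinTree) : (codeL t).sum = internals t := by
  induction t with
  | leaf => rfl
  | node l r ihl ihr =>
    rw [codeL_node, List.sum_cons, List.sum_append]
    have h := codeL_eq_cons l
    have h2 : (codeL l).sum = leftLen l + ((codeL l).tail).sum := by
      conv_lhs => rw [h]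
      rw [List.sum_cons]
    simp only [internals]
    omega

lemma luk_codeL (t : BinTree) : Luk (codeL t) := by
  induction t with
  | leaf => intro j h1 h2; rw [length_codeL] at h2; simp [internals] at h2; omega
  | node l r ihl ihr =>
    intro j hj1 hjlt
    rw [length_codeL] at hjlt
    simp only [internals] at hjlt
    rw [codeL_node]
    obtain ⟨j', rfl⟩ : ∃ j', j = j' + 1 := ⟨j - 1, by omega⟩
    rw [List.take_succ_cons, List.sum_cons]
    set u := codeL r with hu
    set s := (codeL l).tail with hs
    have hul : u.length = internals r + 1 := length_codeL r
    have hus : u.sum = internals r := sum_codeL r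
    have hsl : s.length = internals l := by
      rw [hs, List.length_tail, length_codeL]
      omega
    rcases Nat.lt_or_ge j' (internals r + 1) with hcase | hcase
    · rw [List.take_append_of_le_length (by omega)]
      rcases Nat.eq_or_lt_of_le hj1 with h1 | h1
      · omega
      · have := ihr j' (by omega) (by rw [hul] at *; omega)
        omega
    · rw [List.take_append, List.take_of_length_le (by omega), List.sum_append]
      set m := j' - u.length with hm
      have hml : m + 1 < (codeL l).length := by rw [length_codeL]; omega
      have := ihl (m + 1) (by omega) hml
      have htake : (codeL l).take (m + 1) = leftLen l :: s.take m := by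
        conv_lhs => rw [codeL_eq_cons l]
        rw [List.take_succ_cons]
      rw [htake, List.sum_cons] at this
      omega

lemma luk_complete_prefix_eq {u u' v v' : List ℕ} (hu : u.sum + 1 = u.length)
    (hu' : u'.sum + 1 = u'.length) (hL : Luk u) (hL' : Luk u')
    (h : u ++ v = u' ++ v') : u = u' := by
  have key : ∀ (a b c d : List ℕ), a.sum + 1 = a.length → b.sum + 1 = b.length →
      Luk a → Luk b → a ++ c = b ++ d → a.length ≤ b.length → a = b := by
    intro a b c d ha hb hLa hLb hcd hle
    have htake : a = b.take a.length := by
      have h1 : (a ++ c).take a.length = a := List.take_left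
      have h2 : (b ++ d).take a.length = b.take a.length :=
        List.take_append_of_le_length hle
      conv_lhs => rw [← h1, hcd, h2]
    rcases Nat.eq_or_lt_of_le hle with heq | hlt
    · refine htake.trans ?_
      rw [heq]
      exact List.take_length
    · exfalso
      have := hLb a.length (by omega) hlt
      rw [← htake] at this
      omega
  rcases Nat.le_total u.length u'.length with hle | hle
  · exact key u u' v v' hu hu' hL hL' h hle
  · exact (key u' u v' v hu' hu hL' hL h.symm hle).symm

lemma codeL_complete (t : BinTree) : (codeL t).sum + 1 = (codeL t).length := by
  rw [sum_codeL, length_codeL]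

lemma codeL_injective : Function.Injective codeL := by
  intro t t' h
  induction t generalizing t' with
  | leaf =>
    cases t' with
    | leaf => rfl
    | node l' r' =>
      exfalso
      have := congrArg List.length h
      rw [length_codeL, length_codeL] at this
      simp [internals] at this
  | node l r ihl ihr =>
    cases t' with
    | leaf =>
      exfalso
      have := congrArg List.length h
      rw [length_codeL, length_codeL] at this
      simp [internals] at this
    | node l' r' =>
      rw [codeL_node, codeL_node] at h
      have h1 : leftLen l + 1 = leftLen l' + 1 := by
        have := congrArg (fun w => w.headI) h
        simpa using this
      have h2 : codeL r ++ (codeL l).tail = codeL r' ++ (codeL l').tail := by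
        have := congrArg List.tail h
        simpa using this
      have h3 : codeL r = codeL r' :=
        luk_complete_prefix_eq (codeL_complete r) (codeL_complete r')
          (luk_codeL r) (luk_codeL r') h2
      have h4 : (codeL l).tail = (codeL l').tail := by
        rw [h3] at h2
        exact List.append_cancel_left h2
      have h5 : codeL l = codeL l' := by
        rw [codeL_eq_cons l, codeL_eq_cons l', h4]
        congr 1
        omega
      rw [ihl h5, ihr h3]

lemma codeL_surjective : ∀ n (w : List ℕ), w.length = n + 1 → w.sum = n → Luk w →
    ∃ t : BinTree, codeL t = w := by
  intro n
  induction n using Nat.strong_induction_on with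
  | _ n IH =>
  intro w hlen hsum hluk
  rcases n with _ | n'
  · -- n = 0 : w = [0]
    obtain ⟨a, rfl⟩ := List.length_eq_one_iff.mp hlen
    have : a = 0 := by simpa using hsum
    exact ⟨.leaf, by rw [this]; rfl⟩
  · set n := n' + 1 with hn
    obtain ⟨w₀, rest, rfl⟩ : ∃ w₀ rest, w = w₀ :: rest := by
      cases w with
      | nil => simp at hlen
      | cons a l => exact ⟨a, l, rfl⟩
    have hrlen : rest.length = n := by simpa using hlen
    have hw₀ : 1 ≤ w₀ := by
      have := hluk 1 le_rfl (by rw [hlen]; omega)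
      simpa using this
    have hrsum : w₀ + rest.sum = n := by simpa using hsum
    -- first crossing
    have hex : ∃ m, m ≤ rest.length ∧ (rest.take m).sum + 1 ≤ m := by
      refine ⟨n, by omega, ?_⟩
      rw [← hrlen, List.take_length]
      omega
    set m₀ := Nat.find hex with hm₀def
    obtain ⟨hm₀le, hm₀cross⟩ := Nat.find_spec hex
    rw [← hm₀def] at hm₀le hm₀cross
    have hm₀pos : 1 ≤ m₀ := by
      rcases Nat.eq_zero_or_pos m₀ with h | h
      · rw [h] at hm₀cross; simp at hm₀cross
      · exact h
    have hnotless : ∀ j, j < m₀ → j ≤ rest.length → j ≤ (rest.take j).sum := by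
      intro j hj hjle
      have := Nat.find_min hex hj
      rw [← hm₀def] at *
      push_neg at this
      have := this hjle
      omega
    have hm₀eq : (rest.take m₀).sum + 1 = m₀ := by
      have h1 := hnotless (m₀ - 1) (by omega) (by omega)
      have h2 := List.sum_take_succ rest (m₀ - 1) (by omega)
      rw [show m₀ - 1 + 1 = m₀ by omega] at h2
      omega
    set u := rest.take m₀ with hudef
    set v := rest.drop m₀ with hvdef
    have huv : u ++ v = rest := List.take_append_drop m₀ rest
    have hulen : u.length = m₀ := by rw [hudef, List.length_take]; omega
    have husum : u.sum + 1 = m₀ := hm₀eq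
    have huvsum : u.sum + v.sum = rest.sum := by rw [← List.sum_append, huv]
    have hluku : Luk u := by
      intro j hj1 hjlt
      rw [hulen] at hjlt
      have h1 : u.take j = rest.take j := by
        rw [hudef, List.take_take, min_eq_left (by omega)]
      rw [h1]
      exact hnotless j hjlt (by omega)
    obtain ⟨r, hr⟩ := IH (m₀ - 1) (by omega) u (by omega) (by omega) hluku
    -- left word
    set wl : List ℕ := (w₀ - 1) :: v with hwldef
    have hvlen : v.length = n - m₀ := by rw [hvdef, List.length_drop]; omega
    have hwllen : wl.length = (n - m₀) + 1 := by rw [hwldef]; simp [hvlen]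
    have hwlsum : wl.sum = n - m₀ := by
      rw [hwldef, List.sum_cons]
      omega
    have hlukwl : Luk wl := by
      intro j hj1 hjlt
      rw [hwllen] at hjlt
      obtain ⟨j', rfl⟩ : ∃ j', j = j' + 1 := ⟨j - 1, by omega⟩
      rw [hwldef, List.take_succ_cons, List.sum_cons]
      have htk : rest.take (m₀ + j') = u ++ v.take j' := by
        rw [hudef, hvdef, ← List.take_add]
      have hw := hluk (m₀ + j' + 1) (by omega) (by rw [hlen]; omega)
      have htk2 : (w₀ :: rest).take (m₀ + j' + 1) = w₀ :: rest.take (m₀ + j') :=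
        List.take_succ_cons ..
      rw [htk2, List.sum_cons, htk, List.sum_append] at hw
      omega
    obtain ⟨l, hl⟩ := IH (n - m₀) (by omega) wl hwllen hwlsum hlukwl
    refine ⟨.node l r, ?_⟩
    have hhead : leftLen l = w₀ - 1 := by
      have h6 := codeL_eq_cons l
      rw [hl] at h6
      have := congrArg List.headI h6
      rw [hwldef] at this
      simpa using this.symm
    rw [codeL_node, hr, hl, hhead]
    simp only [hwldef, List.tail_cons]
    rw [show w₀ - 1 + 1 = w₀ by omega, huv]

end CBT

-- Section 4: initial vertices
namespace CBT
open BinTree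

lemma initsP_subtreeAt : ∀ (t : BinTree), ∀ x ∈ initsP t, subtreeAt t x.1 = some x.2 := by
  intro t
  induction t with
  | leaf => intro x hx; simp [initsP] at hx; rw [hx]; rfl
  | node l r ihl ihr =>
    intro x hx
    simp only [initsP, List.mem_cons, List.mem_append, List.mem_map] at hx
    rcases hx with rfl | ⟨q, hq, rfl⟩ | ⟨q, hq, rfl⟩
    · rfl
    · exact ihr q hq
    · exact ihl q (List.mem_of_mem_tail hq)

lemma pathLen_of_mem_initsP {t : BinTree} {x : List Bool × BinTree} (hx : x ∈ initsP t) :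
    pathLen t x.1 = leftLen x.2 := by
  rw [pathLen, initsP_subtreeAt t x hx]

lemma getLast?_cons_of_ne_nil {a : Bool} {l : List Bool} (h : l ≠ []) :
    (a :: l).getLast? = l.getLast? := by
  cases l with
  | nil => exact absurd rfl h
  | cons b m => exact List.getLast?_cons_cons ..

lemma initsP_tail_last : ∀ (t : BinTree), ∀ x ∈ (initsP t).tail, x.1.getLast? = some true := by
  intro t
  induction t with
  | leaf => intro x hx; simp [initsP] at hx
  | node l r ihl ihr =>
    intro x hx
    simp only [initsP, List.tail_cons, List.mem_append, List.mem_map] at hx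
    rcases hx with ⟨q, hq, rfl⟩ | ⟨q, hq, rfl⟩
    · rw [initsP_eq_cons r] at hq
      rcases List.mem_cons.mp hq with rfl | hq'
      · rfl
      · have hlast := ihr q hq'
        have hne : q.1 ≠ [] := by
          intro he
          rw [he] at hlast
          simp at hlast
        rw [getLast?_cons_of_ne_nil hne]
        exact hlast
    · have hlast := ihl q hq
      have hne : q.1 ≠ [] := by
        intro he
        rw [he] at hlast
        simp at hlast
      rw [getLast?_cons_of_ne_nil hne]
      exact hlast

lemma initsP_fst_last {t : BinTree} {x : List Bool × BinTree} (hx : x ∈ initsP t) :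
    x.1 = [] ∨ x.1.getLast? = some true := by
  rw [initsP_eq_cons t] at hx
  rcases List.mem_cons.mp hx with rfl | hx'
  · exact Or.inl rfl
  · exact Or.inr (initsP_tail_last t x hx')

lemma isInitial_of_mem_initsP {t : BinTree} {x : List Bool × BinTree} (hx : x ∈ initsP t) :
    IsInitial t x.1 :=
  ⟨by rw [initsP_subtreeAt t x hx]; rfl, initsP_fst_last hx⟩

lemma mem_initsP_of_isInitial : ∀ (t : BinTree) (p : List Bool), IsInitial t p →
    ∃ s, (p, s) ∈ initsP t := by
  intro t
  induction t with
  | leaf =>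
    intro p hp
    cases p with
    | nil => exact ⟨.leaf, by simp [initsP]⟩
    | cons b q => exact absurd hp.1 (by rw [show subtreeAt .leaf (b :: q) = none from rfl]; simp)
  | node l r ihl ihr =>
    intro p hp
    cases p with
    | nil => exact ⟨.node l r, by rw [initsP_eq_cons]; exact List.mem_cons_self ..⟩
    | cons b q =>
      have hlast : (b :: q).getLast? = some true := by
        rcases hp.2 with h | h
        · exact absurd h (by simp)
        · exact h
      cases q with
      | nil =>
        have hb : b = true := by simpa using hlast
        subst hb
        refine ⟨r, ?_⟩
        simp only [initsP, List.mem_cons, List.mem_append, List.mem_map]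
        refine Or.inr (Or.inl ⟨([], r), ?_, rfl⟩)
        rw [initsP_eq_cons r]
        exact List.mem_cons_self ..
      | cons c q' =>
        have hlast' : (c :: q').getLast? = some true := by
          rwa [List.getLast?_cons_cons] at hlast
        cases b with
        | true =>
          have hinit : IsInitial r (c :: q') := ⟨hp.1, Or.inr hlast'⟩
          obtain ⟨s, hs⟩ := ihr _ hinit
          refine ⟨s, ?_⟩
          simp only [initsP, List.mem_cons, List.mem_append, List.mem_map]
          exact Or.inr (Or.inl ⟨(c :: q', s), hs, rfl⟩)
        | false =>
          have hinit : IsInitial l (c :: q') := ⟨hp.1, Or.inr hlast'⟩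
          obtain ⟨s, hs⟩ := ihl _ hinit
          refine ⟨s, ?_⟩
          simp only [initsP, List.mem_cons, List.mem_append, List.mem_map]
          refine Or.inr (Or.inr ⟨(c :: q', s), ?_, rfl⟩)
          rw [initsP_eq_cons l] at hs
          rcases List.mem_cons.mp hs with h | h
          · exact absurd (congrArg Prod.fst h) (by simp)
          · exact h

lemma mem_fst_initsP_iff {t : BinTree} {p : List Bool} :
    p ∈ (initsP t).map Prod.fst ↔ IsInitial t p := by
  constructor
  · intro hp
    obtain ⟨x, hx, rfl⟩ := List.mem_map.mp hp
    exact isInitial_of_mem_initsP hx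
  · intro hp
    obtain ⟨s, hs⟩ := mem_initsP_of_isInitial t p hp
    exact List.mem_map.mpr ⟨(p, s), hs, rfl⟩

lemma nodup_fst_initsP : ∀ t : BinTree, ((initsP t).map Prod.fst).Nodup := by
  intro t
  induction t with
  | leaf => simp [initsP]
  | node l r ihl ihr =>
    simp only [initsP, List.map_cons, List.map_append, List.map_map]
    rw [List.nodup_cons]
    constructor
    · simp only [List.mem_append, List.mem_map]
      rintro (⟨q, _, h⟩ | ⟨q, _, h⟩) <;> simp [Function.comp] at h
    · rw [List.nodup_append]
      refine ⟨?_, ?_, ?_⟩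
      · have : ((fun q : List Bool × BinTree => q.1) ∘ fun q : List Bool × BinTree =>
            (true :: q.1, q.2)) = (List.cons true) ∘ Prod.fst := rfl
        rw [this, ← List.map_map]
        exact ihr.map (List.cons_injective)
      · have : ((fun q : List Bool × BinTree => q.1) ∘ fun q : List Bool × BinTree =>
            (false :: q.1, q.2)) = (List.cons false) ∘ Prod.fst := rfl
        rw [this, ← List.map_map]
        refine List.Nodup.map (List.cons_injective) ?_
        rw [List.map_tail]
        exact ihl.tail
      · intro a ha b hb
        simp only [List.mem_map, Function.comp] at ha hb
        obtain ⟨q, _, rfl⟩ := ha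
        obtain ⟨q', _, rfl⟩ := hb
        simp

lemma nodup_vertices : ∀ t : BinTree, (vertices t).Nodup := by
  intro t
  induction t with
  | leaf => simp [vertices]
  | node l r ihl ihr =>
    simp only [vertices]
    rw [List.nodup_cons]
    constructor
    · simp only [List.mem_append, List.mem_map]
      rintro (⟨q, _, h⟩ | ⟨q, _, h⟩) <;> simp at h
    · rw [List.nodup_append]
      refine ⟨ihl.map List.cons_injective, ihr.map List.cons_injective, ?_⟩
      intro a ha b hb
      simp only [List.mem_map] at ha hb
      obtain ⟨q, _, rfl⟩ := ha
      obtain ⟨q', _, rfl⟩ := hb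
      simp

lemma initsP_fst_subset_vertices : ∀ (t : BinTree), ∀ x ∈ initsP t, x.1 ∈ vertices t := by
  intro t
  induction t with
  | leaf => intro x hx; simp [initsP] at hx; simp [vertices, hx]
  | node l r ihl ihr =>
    intro x hx
    simp only [initsP, List.mem_cons, List.mem_append, List.mem_map] at hx
    simp only [vertices, List.mem_cons, List.mem_append, List.mem_map]
    rcases hx with rfl | ⟨q, hq, rfl⟩ | ⟨q, hq, rfl⟩
    · exact Or.inl rfl
    · exact Or.inr (Or.inr ⟨q.1, ihr q hq, rfl⟩)
    · exact Or.inr (Or.inl ⟨q.1, ihl q (List.mem_of_mem_tail hq), rfl⟩)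

end CBT

-- Section 5: encoding colored binary trees
namespace CBT
open BinTree

lemma colorNum_eq (B : ColoredBinTree) :
    B.colorNum = ((initsP B.tree).map (fun x => B.color x.1)).sum := by
  have h1 : ((initsP B.tree).map (fun x => B.color x.1))
      = ((initsP B.tree).map Prod.fst).map B.color := by
    rw [List.map_map]
    rfl
  rw [ColoredBinTree.colorNum, h1, ← List.sum_toFinset _ (nodup_vertices B.tree),
    ← List.sum_toFinset _ (nodup_fst_initsP B.tree)]
  refine (Finset.sum_subset ?_ ?_).symm
  · intro q hq
    rw [List.mem_toFinset] at hq ⊢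
    obtain ⟨x, hx, rfl⟩ := List.mem_map.mp hq
    exact initsP_fst_subset_vertices B.tree x hx
  · intro q hq hnq
    rw [List.mem_toFinset] at hnq
    refine B.color_eq_zero q ?_
    intro hinit
    exact hnq (mem_fst_initsP_iff.mpr hinit)

/-- The labeled Łukasiewicz word of a colored binary tree. -/
def encode (B : ColoredBinTree) : List (ℕ × ℕ) :=
  (initsP B.tree).map (fun x => (leftLen x.2, B.color x.1))

lemma encode_fst (B : ColoredBinTree) : (encode B).map Prod.fst = codeL B.tree := by
  rw [encode, codeL, List.map_map]
  rfl

lemma encode_snd (B : ColoredBinTree) : ((encode B).map Prod.snd).sum = B.colorNum := by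
  rw [colorNum_eq, encode, List.map_map]
  rfl

lemma encode_length (B : ColoredBinTree) :
    (encode B).length = internals B.tree + 1 := by
  rw [encode, List.length_map, length_initsP]

lemma encode_pointwise (B : ColoredBinTree) : ∀ y ∈ encode B, 2 * y.2 ≤ y.1 := by
  intro y hy
  obtain ⟨x, hx, rfl⟩ := List.mem_map.mp hy
  have h1 := B.color_le x.1 (isInitial_of_mem_initsP hx)
  rw [pathLen_of_mem_initsP hx] at h1
  have := (Nat.le_div_iff_mul_le (by omega : 0 < 2)).mp h1
  dsimp only
  omega

lemma encode_injective : Function.Injective encode := by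
  intro B B' h
  have hfst : codeL B.tree = codeL B'.tree := by
    rw [← encode_fst, ← encode_fst, h]
  have ht : B.tree = B'.tree := codeL_injective hfst
  have hpt : ∀ x ∈ initsP B.tree, B.color x.1 = B'.color x.1 := by
    rw [encode, encode, ← ht] at h
    intro x hx
    have := List.map_inj_left.mp h x hx
    exact (Prod.mk.injEq .. ▸ this).2
  have hcol : B.color = B'.color := by
    funext q
    by_cases hi : IsInitial B.tree q
    · obtain ⟨s, hs⟩ := mem_initsP_of_isInitial B.tree q hi
      exact hpt (q, s) hs
    · rw [B.color_eq_zero q hi, B'.color_eq_zero q (by rwa [← ht])]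
  rcases B with ⟨t1, c1, p1, p2⟩
  rcases B' with ⟨t2, c2, p3, p4⟩
  simp only at ht hcol
  subst ht
  subst hcol
  rfl

lemma encode_surjective {n : ℕ} {w : List (ℕ × ℕ)} (hlen : w.length = n + 1)
    (hsum : (w.map Prod.fst).sum = n) (hluk : Luk (w.map Prod.fst))
    (hpt : ∀ y ∈ w, 2 * y.2 ≤ y.1) : ∃ B : ColoredBinTree, encode B = w := by
  classical
  letI : BEq (List Bool) := instBEqOfDecidableEq
  obtain ⟨t, ht⟩ := codeL_surjective n (w.map Prod.fst) (by simp [hlen]) hsum hluk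
  have hint : internals t = n := by
    have := congrArg List.length ht
    rw [length_codeL, List.length_map, hlen] at this
    omega
  set P : List (List Bool) := (initsP t).map Prod.fst with hP
  have hPlen : P.length = n + 1 := by rw [hP, List.length_map, length_initsP, hint]
  set cf : List Bool → ℕ := fun q => (w.map Prod.snd).getD (P.idxOf q) 0 with hcf
  have hinits_len : (initsP t).length = n + 1 := by rw [length_initsP, hint]
  -- value of cf at position i
  have hcf_at : ∀ (i : ℕ) (hi : i < n + 1),
      cf ((initsP t)[i]'(by omega)).1 = (w[i]'(by omega)).2 := by
    intro i hi
    have hq : ((initsP t)[i]'(by omega)).1 = P[i]'(by omega) := by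
      simp only [hP, List.getElem_map]
    have hmem : P[i]'(by omega) ∈ P := List.getElem_mem ..
    have hidxlt : P.idxOf (P[i]'(by omega)) < P.length := List.idxOf_lt_length_iff.mpr hmem
    have e3 : P[P.idxOf (P[i]'(by omega))]'hidxlt = P[i]'(by omega) :=
      List.getElem_idxOf hidxlt
    have hnd : P.Nodup := by rw [hP]; exact nodup_fst_initsP t
    have hii : P.idxOf (P[i]'(by omega)) = i := hnd.getElem_inj_iff.mp e3
    rw [hcf]
    simp only [hq, hii]
    rw [List.getD_eq_getElem _ _ (by rw [List.length_map]; omega)]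
    simp only [List.getElem_map]
  -- pathLen at position i
  have hpl_at : ∀ (i : ℕ) (hi : i < n + 1),
      leftLen (((initsP t)[i]'(by omega)).2) = (w[i]'(by omega)).1 := by
    intro i hi
    have h3 : (codeL t)[i]'(by rw [length_codeL, hint]; omega)
        = leftLen (((initsP t)[i]'(by omega)).2) := by
      simp only [codeL, List.getElem_map]
    rw [← h3]
    simp only [ht, List.getElem_map]
  have hpath_at : ∀ (i : ℕ) (hi : i < n + 1),
      pathLen t (((initsP t)[i]'(by omega)).1) = (w[i]'(by omega)).1 := by
    intro i hi
    rw [pathLen_of_mem_initsP (List.getElem_mem ..), hpl_at i hi]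
  -- index of an initial vertex
  have hfind : ∀ q, IsInitial t q → ∃ (i : ℕ) (hi : i < n + 1),
      q = ((initsP t)[i]'(by omega)).1 := by
    intro q hq
    have hmem : q ∈ P := by rw [hP]; exact mem_fst_initsP_iff.mpr hq
    have hidxlt : P.idxOf q < P.length := List.idxOf_lt_length_iff.mpr hmem
    refine ⟨P.idxOf q, by omega, ?_⟩
    have e3 : P[P.idxOf q]'hidxlt = q := List.getElem_idxOf hidxlt
    have e4 : ((initsP t)[P.idxOf q]'(by omega)).1 = P[P.idxOf q]'hidxlt := by
      simp only [hP, List.getElem_map]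
    rw [e4, e3]
  have hcf_le : ∀ q, IsInitial t q → cf q ≤ pathLen t q / 2 := by
    intro q hq
    obtain ⟨i, hi, rfl⟩ := hfind q hq
    rw [hcf_at i hi, hpath_at i hi]
    have hmem : w[i]'(by omega) ∈ w := List.getElem_mem ..
    have := hpt _ hmem
    rw [Nat.le_div_iff_mul_le (by omega : 0 < 2)]
    omega
  have hcf_zero : ∀ q, ¬ IsInitial t q → cf q = 0 := by
    intro q hq
    rw [hcf]
    apply List.getD_eq_default
    rw [List.length_map, hlen, ← hPlen]
    by_contra hcon
    push_neg at hcon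
    exact hq (by
      rw [hP] at hcon
      exact mem_fst_initsP_iff.mp (List.idxOf_lt_length_iff.mp hcon))
  refine ⟨⟨t, cf, hcf_le, hcf_zero⟩, ?_⟩
  rw [encode]
  apply List.ext_getElem (by rw [List.length_map, length_initsP, hint, hlen])
  intro i h1 h2
  have hi : i < n + 1 := by omega
  rw [List.getElem_map]
  have e1 := hcf_at i hi
  have e2 := hpl_at i hi
  exact Prod.ext e2 e1

end CBT

-- Section 6: assembly
namespace CBT
open BinTree

/-- Labeled words: the colored analogue of Łukasiewicz words, without the ballot condition. -/
def SType (n p : ℕ) : Type :=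
  {w : List (ℕ × ℕ) // w.length = n + 1 ∧ (w.map Prod.fst).sum = n ∧
    (w.map Prod.snd).sum = p ∧ ∀ y ∈ w, 2 * y.2 ≤ y.1}

/-- Labeled Łukasiewicz words. -/
def WType (n p : ℕ) : Type :=
  {w : List (ℕ × ℕ) // (w.length = n + 1 ∧ (w.map Prod.fst).sum = n ∧
    (w.map Prod.snd).sum = p ∧ ∀ y ∈ w, 2 * y.2 ≤ y.1) ∧ Luk (w.map Prod.fst)}

lemma rotate_full {α : Type*} {w : List α} {m : ℕ} (h : w.length = m) : w.rotate m = w := by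
  subst h
  exact List.rotate_length w

lemma colored_equiv_card (n p : ℕ) :
    Nat.card {B : ColoredBinTree // B.tree.internals = n ∧ B.colorNum = p}
      = Nat.card (WType n p) := by
  refine Nat.card_congr (Equiv.ofBijective (fun B =>
    (⟨encode B.1, ⟨?_, ?_, ?_, encode_pointwise B.1⟩, ?_⟩ : WType n p)) ⟨?_, ?_⟩)
  · rw [encode_length, B.2.1]
  · rw [encode_fst, sum_codeL, B.2.1]
  · rw [encode_snd, B.2.2]
  · rw [encode_fst]; exact luk_codeL B.1.tree
  · intro B B' h
    have := congrArg Subtype.val h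
    exact Subtype.ext (encode_injective this)
  · rintro ⟨w, ⟨hlen, hfsum, hssum, hpt⟩, hluk⟩
    obtain ⟨B, hB⟩ := encode_surjective hlen hfsum hluk hpt
    have h1 : B.tree.internals = n := by
      have := encode_length B
      rw [hB, hlen] at this
      omega
    have h2 : B.colorNum = p := by rw [← encode_snd, hB, hssum]
    exact ⟨⟨B, h1, h2⟩, Subtype.ext hB⟩

lemma rotation_card (n p : ℕ) :
    Nat.card (SType n p) = Nat.card (WType n p) * (n + 1) := by
  have hEU : ∀ s : SType n p, ∃! k, k < n + 1 ∧ Luk ((s.1.map Prod.fst).rotate k) := by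
    rintro ⟨w, hlen, hfsum, _⟩
    exact exists_unique_rotate_luk (by rw [List.length_map, hlen]) hfsum
  have hrotmem : ∀ (w : List (ℕ × ℕ)), (w.length = n + 1 ∧ (w.map Prod.fst).sum = n ∧
      (w.map Prod.snd).sum = p ∧ ∀ y ∈ w, 2 * y.2 ≤ y.1) → ∀ m,
      ((w.rotate m).length = n + 1 ∧ ((w.rotate m).map Prod.fst).sum = n ∧
      ((w.rotate m).map Prod.snd).sum = p ∧ ∀ y ∈ w.rotate m, 2 * y.2 ≤ y.1) := by
    rintro w ⟨h1, h2, h3, h4⟩ m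
    refine ⟨by rw [List.length_rotate, h1], ?_, ?_, ?_⟩
    · rw [List.map_rotate, (List.rotate_perm _ _).sum_eq, h2]
    · rw [List.map_rotate, (List.rotate_perm _ _).sum_eq, h3]
    · intro y hy
      exact h4 y (List.mem_rotate.mp hy)
  have key : Function.Bijective (fun bk : WType n p × Fin (n + 1) =>
      (⟨bk.1.1.rotate ((n + 1) - bk.2.1), hrotmem bk.1.1 bk.1.2.1 _⟩ : SType n p)) := by
    constructor
    · rintro ⟨⟨b, hb, hbl⟩, k⟩ ⟨⟨b', hb', hbl'⟩, k'⟩ h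
      have hval := congrArg Subtype.val h
      dsimp at hval
      have hblen : b.length = n + 1 := hb.1
      have hblen' : b'.length = n + 1 := hb'.1
      have hrec : ∀ (c : List (ℕ × ℕ)) (j : Fin (n + 1)), c.length = n + 1 →
          (c.rotate ((n + 1) - j.1)).rotate j.1 = c := by
        intro c j hc
        rw [List.rotate_rotate, show (n + 1) - j.1 + j.1 = n + 1 by omega, rotate_full hc]
      set s : SType n p := ⟨b.rotate ((n + 1) - k.1), hrotmem b hb _⟩ with hs
      have hk : k.1 < n + 1 ∧ Luk ((s.1.map Prod.fst).rotate k.1) := by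
        refine ⟨k.2, ?_⟩
        rw [hs, ← List.map_rotate, hrec b k hblen]
        exact hbl
      have hk' : k'.1 < n + 1 ∧ Luk ((s.1.map Prod.fst).rotate k'.1) := by
        refine ⟨k'.2, ?_⟩
        have hs' : s.1 = b'.rotate ((n + 1) - k'.1) := hval
        rw [hs', ← List.map_rotate, hrec b' k' hblen']
        exact hbl'
      obtain ⟨k₀, _, huniq⟩ := hEU s
      have e1 : k.1 = k₀ := huniq k.1 hk
      have e2 : k'.1 = k₀ := huniq k'.1 hk'
      have ekk : k = k' := Fin.ext (by omega)
      subst ekk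
      have : b = b' := by
        have := congrArg (fun l => l.rotate k.1) hval
        rwa [hrec b k hblen, hrec b' k hblen'] at this
      simp [this]
    · rintro ⟨w, hw⟩
      obtain ⟨k, ⟨hk, hkluk⟩, _⟩ := hEU ⟨w, hw⟩
      refine ⟨⟨⟨w.rotate k, hrotmem w hw k, ?_⟩, ⟨k, hk⟩⟩, ?_⟩
      · rw [List.map_rotate]
        exact hkluk
      · apply Subtype.ext
        dsimp
        rw [List.rotate_rotate, show k + ((n + 1) - k) = n + 1 by omega, rotate_full hw.1]
  have hcc : Nat.card (WType n p × Fin (n + 1)) = Nat.card (SType n p) :=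
    Nat.card_congr (Equiv.ofBijective _ key)
  rw [← hcc, Nat.card_prod]
  congr 1
  rw [Nat.card_eq_fintype_card, Fintype.card_fin]

-- zip helpers
lemma zip_roundtrip : ∀ (w : List (ℕ × ℕ)), (∀ y ∈ w, 2 * y.2 ≤ y.1) →
    List.zipWith (fun a b => (b + 2 * a, a)) (w.map Prod.snd)
      (w.map (fun y => y.1 - 2 * y.2)) = w := by
  intro w
  induction w with
  | nil => intro _; rfl
  | cons y l ih =>
    intro h
    simp only [List.map_cons, List.zipWith_cons_cons]
    have hy := h y (List.mem_cons_self ..)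
    rw [ih (fun z hz => h z (List.mem_cons_of_mem _ hz))]
    congr 1
    exact Prod.ext (by dsimp; omega) rfl

lemma sum_sub_eq : ∀ (w : List (ℕ × ℕ)), (∀ y ∈ w, 2 * y.2 ≤ y.1) →
    (w.map (fun y => y.1 - 2 * y.2)).sum + 2 * (w.map Prod.snd).sum = (w.map Prod.fst).sum := by
  intro w
  induction w with
  | nil => intro _; rfl
  | cons y l ih =>
    intro h
    simp only [List.map_cons, List.sum_cons]
    have hy := h y (List.mem_cons_self ..)
    have := ih (fun z hz => h z (List.mem_cons_of_mem _ hz))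
    omega

lemma map_snd_zip : ∀ (c e : List ℕ), c.length = e.length →
    (List.zipWith (fun a b => (b + 2 * a, a)) c e).map Prod.snd = c := by
  intro c
  induction c with
  | nil => intro e _; rfl
  | cons a c ih =>
    intro e he
    cases e with
    | nil => simp at he
    | cons b e =>
      simp only [List.zipWith_cons_cons, List.map_cons]
      rw [ih e (by simpa using he)]

lemma map_sub_zip : ∀ (c e : List ℕ), c.length = e.length →
    (List.zipWith (fun a b => (b + 2 * a, a)) c e).map (fun y => y.1 - 2 * y.2) = e := by
  intro c
  induction c with
  | nil =>
    intro e he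
    cases e with
    | nil => rfl
    | cons b e => simp at he
  | cons a c ih =>
    intro e he
    cases e with
    | nil => simp at he
    | cons b e =>
      simp only [List.zipWith_cons_cons, List.map_cons]
      rw [ih e (by simpa using he)]
      congr 1
      omega

lemma sum_fst_zip : ∀ (c e : List ℕ), c.length = e.length →
    ((List.zipWith (fun a b => (b + 2 * a, a)) c e).map Prod.fst).sum = e.sum + 2 * c.sum := by
  intro c
  induction c with
  | nil =>
    intro e he
    cases e with
    | nil => rfl
    | cons b e => simp at he
  | cons a c ih =>
    intro e he
    cases e with
    | nil => simp at he
    | cons b e =>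
      simp only [List.zipWith_cons_cons, List.map_cons, List.sum_cons]
      rw [ih e (by simpa using he)]
      omega

lemma pw_zip : ∀ (c e : List ℕ), ∀ y ∈ List.zipWith (fun a b => (b + 2 * a, a)) c e,
    2 * y.2 ≤ y.1 := by
  intro c
  induction c with
  | nil => intro e y hy; simp at hy
  | cons a c ih =>
    intro e y hy
    cases e with
    | nil => simp at hy
    | cons b e =>
      rw [List.zipWith_cons_cons] at hy
      rcases List.mem_cons.mp hy with rfl | hy'
      · dsimp; omega
      · exact ih e y hy'

lemma stype_card (n p : ℕ) (hp : 2 * p ≤ n) :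
    Nat.card (SType n p) = (p + n).choose n * ((n - 2 * p + n).choose n) := by
  have e : SType n p ≃
      {c : List ℕ // c.length = n + 1 ∧ c.sum = p} ×
      {e : List ℕ // e.length = n + 1 ∧ e.sum = n - 2 * p} := by
    refine
      { toFun := fun s => (⟨s.1.map Prod.snd, by rw [List.length_map, s.2.1], s.2.2.2.1⟩,
          ⟨s.1.map (fun y => y.1 - 2 * y.2), by rw [List.length_map, s.2.1], ?_⟩)
        invFun := fun ce => ⟨List.zipWith (fun a b => (b + 2 * a, a)) ce.1.1 ce.2.1,
          ?_, ?_, ?_, pw_zip ce.1.1 ce.2.1⟩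
        left_inv := ?_
        right_inv := ?_ }
    · have h1 := sum_sub_eq s.1 s.2.2.2.2
      rw [s.2.2.1, s.2.2.2.1] at h1
      omega
    · rw [List.length_zipWith, ce.1.2.1, ce.2.2.1]
      omega
    · have hlen : ce.1.1.length = ce.2.1.length := by rw [ce.1.2.1, ce.2.2.1]
      rw [sum_fst_zip _ _ hlen, ce.1.2.2, ce.2.2.2]
      omega
    · have hlen : ce.1.1.length = ce.2.1.length := by rw [ce.1.2.1, ce.2.2.1]
      rw [map_snd_zip _ _ hlen, ce.1.2.2]
    · intro s
      apply Subtype.ext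
      exact zip_roundtrip s.1 s.2.2.2.2
    · intro ce
      have hlen : ce.1.1.length = ce.2.1.length := by rw [ce.1.2.1, ce.2.2.1]
      refine Prod.ext (Subtype.ext ?_) (Subtype.ext ?_)
      · exact map_snd_zip _ _ hlen
      · exact map_sub_zip _ _ hlen
  rw [Nat.card_congr e, Nat.card_prod, card_lists, card_lists]

end CBT


/-- **Counting colored binary trees by color number.** For all nonnegative integers `n`
and `p` with `p ≤ ⌊n/2⌋`, the number `f_{n,p}` of colored binary trees with `n`
internal vertices and color number `p` equals `(1/(n+1)) C(n+p, p) C(2n-2p, n-2p)`. -/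
theorem card_colored_binary_trees (n p : ℕ) (hp : p ≤ n / 2) :
    (Nat.card {B : ColoredBinTree // B.tree.internals = n ∧ B.colorNum = p} : ℚ) =
      1 / (n + 1) * ((n + p).choose p) * ((2 * n - 2 * p).choose (n - 2 * p)) := by
  have hp2 : 2 * p ≤ n := by omega
  have e1 := CBT.colored_equiv_card n p
  have e2 := CBT.rotation_card n p
  have e3 := CBT.stype_card n p hp2
  have hA : (p + n).choose n = (n + p).choose p := by
    rw [show p + n = n + p by omega, ← Nat.choose_symm (by omega : n ≤ n + p),
      show n + p - n = p by omega]
  have hB : (n - 2 * p + n).choose n = (2 * n - 2 * p).choose (n - 2 * p) := by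
    rw [show n - 2 * p + n = 2 * n - 2 * p by omega,
      ← Nat.choose_symm (by omega : n ≤ 2 * n - 2 * p),
      show 2 * n - 2 * p - n = n - 2 * p by omega]
  have key : Nat.card {B : ColoredBinTree // B.tree.internals = n ∧ B.colorNum = p} * (n + 1)
      = (n + p).choose p * ((2 * n - 2 * p).choose (n - 2 * p)) := by
    rw [e1, ← e2, e3, hA, hB]
  have keyQ : (Nat.card {B : ColoredBinTree // B.tree.internals = n ∧ B.colorNum = p} : ℚ)
      * ((n : ℚ) + 1) = ((n + p).choose p : ℚ) * ((2 * n - 2 * p).choose (n - 2 * p) : ℚ) := by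
    exact_mod_cast congrArg (fun x : ℕ => (x : ℚ)) key
  have hne : ((n : ℚ) + 1) ≠ 0 := by positivity
  field_simp
  linarith [keyQ]
end
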